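/- arXiv:2311.02792 — 5 statements merged into one kernel-verified Lean document; each statement's English description precedes it below -/
import Mathlib

section
/- Let Γ be an unbalanced connected signed graph on n vertices and H a spanning subgraph with n edges whose connected components are all trees or unbalanced unicyclic graphs (hence all components must be unbalanced unicyclic, say c(H) of them). Then det(N_H) = ±2^{c(H)}, where N_H is the n×n incidence matrix of H. -/
open Matrix BigOperators

/-- A signed graph together with an enumeration of its edges. -/
structure SignedIncidence (n m : ℕ) where
  G : SimpleGraph (Fin n)
  sigma : Fin n → Fin n → ℤ
  sigma_symm : ∀ i j, sigma i j = sigma j i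
  sigma_sign : ∀ i j, G.Adj i j → sigma i j = 1 ∨ sigma i j = -1
  ends : Fin m → Fin n × Fin n
  ends_adj : ∀ ℓ, G.Adj (ends ℓ).1 (ends ℓ).2
  ends_inj : Function.Injective fun ℓ => Sym2.mk (ends ℓ).1 (ends ℓ).2
  ends_surj : ∀ e ∈ G.edgeSet, ∃ ℓ, Sym2.mk (ends ℓ).1 (ends ℓ).2 = e

namespace SignedIncidence

variable {n m : ℕ}

def edge (S : SignedIncidence n m) (ℓ : Fin m) : Sym2 (Fin n) := Sym2.mk (S.ends ℓ).1 (S.ends ℓ).2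

/-- `N` is an incidence matrix of the signed graph `S`. -/
def IsIncidence (S : SignedIncidence n m) (N : Matrix (Fin n) (Fin m) ℝ) : Prop :=
  ∀ ℓ : Fin m,
    N (S.ends ℓ).1 ℓ * N (S.ends ℓ).2 ℓ = -((S.sigma (S.ends ℓ).1 (S.ends ℓ).2 : ℤ) : ℝ) ∧
    (N (S.ends ℓ).1 ℓ = 1 ∨ N (S.ends ℓ).1 ℓ = -1) ∧
    (N (S.ends ℓ).2 ℓ = 1 ∨ N (S.ends ℓ).2 ℓ = -1) ∧
    ∀ k, k ≠ (S.ends ℓ).1 → k ≠ (S.ends ℓ).2 → N k ℓ = 0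

/-- The sign of a walk (in the graph or any subgraph): product of edge signs. -/
def walkSign (S : SignedIncidence n m) {G' : SimpleGraph (Fin n)} {i j : Fin n}
    (w : G'.Walk i j) : ℤ :=
  (w.darts.map fun d => S.sigma d.toProd.1 d.toProd.2).prod

/-- A signed graph is balanced if every closed walk has sign `+1`. -/
def Balanced (S : SignedIncidence n m) : Prop :=
  ∀ (i : Fin n) (w : S.G.Walk i i), S.walkSign w = 1

end SignedIncidence

namespace TUP




/-- `x` equals `y` up to sign. -/
def PM (x y : ℝ) : Prop := x = y ∨ x = -y

/-- `x` is `±1`. -/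
def pm1 (x : ℝ) : Prop := x = 1 ∨ x = -1

lemma PM.rfl {x : ℝ} : PM x x := Or.inl (Eq.refl x)

lemma PM.of_eq {x y : ℝ} (h : x = y) : PM x y := Or.inl h

lemma PM.trans {x y z : ℝ} (h1 : PM x y) (h2 : PM y z) : PM x z := by
  rcases h1 with h1 | h1 <;> rcases h2 with h2 | h2 <;> subst h1 <;> simp [PM, h2]

lemma PM.symm {x y : ℝ} (h : PM x y) : PM y x := by
  rcases h with h | h <;> subst h <;> simp [PM]

lemma PM.cmul {x y : ℝ} (c : ℝ) (h : PM x y) : PM (c * x) (c * y) := by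
  rcases h with h | h <;> subst h <;> simp [PM, mul_comm]

lemma pm1.mul {x y : ℝ} (hx : pm1 x) (hy : pm1 y) : pm1 (x * y) := by
  rcases hx with h | h <;> rcases hy with h' | h' <;> subst h <;> subst h' <;> simp [pm1]

lemma pm1.neg {x : ℝ} (hx : pm1 x) : pm1 (-x) := by
  rcases hx with h | h <;> subst h <;> simp [pm1]

lemma pm1.sq {x : ℝ} (hx : pm1 x) : x * x = 1 := by
  rcases hx with h | h <;> subst h <;> norm_num

lemma pm1.ne_zero {x : ℝ} (hx : pm1 x) : x ≠ 0 := by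
  rcases hx with h | h <;> subst h <;> norm_num

lemma pm1_mul_PM {c x y : ℝ} (hc : pm1 c) (h : PM x y) : PM (c * x) y := by
  rcases hc with hc | hc <;> subst hc <;> rcases h with h | h <;> subst h <;> simp [PM]

/-- Walks in the multigraph given by endpoint maps `a b : E → V`. -/
inductive IsWalk {V E : Type} (a b : E → V) : V → V → List E → Prop
  | nil (v : V) : IsWalk a b v v []
  | consA {w : V} {L : List E} (ℓ : E) : IsWalk a b (b ℓ) w L → IsWalk a b (a ℓ) w (ℓ :: L)
  | consB {w : V} {L : List E} (ℓ : E) : IsWalk a b (a ℓ) w L → IsWalk a b (b ℓ) w (ℓ :: L)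

variable {V E : Type}

/-- The sign of a list of edges. -/
def esgn (a b : E → V) (A : Matrix V E ℝ) (L : List E) : ℝ :=
  (L.map fun ℓ => -(A (a ℓ) ℓ * A (b ℓ) ℓ)).prod

@[simp] lemma esgn_nil (a b : E → V) (A : Matrix V E ℝ) : esgn a b A [] = 1 := rfl

@[simp] lemma esgn_cons (a b : E → V) (A : Matrix V E ℝ) (ℓ : E) (L : List E) :
    esgn a b A (ℓ :: L) = -(A (a ℓ) ℓ * A (b ℓ) ℓ) * esgn a b A L := by
  simp [esgn]

lemma esgn_append (a b : E → V) (A : Matrix V E ℝ) (L L' : List E) :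
    esgn a b A (L ++ L') = esgn a b A L * esgn a b A L' := by
  simp [esgn]

lemma esgn_reverse (a b : E → V) (A : Matrix V E ℝ) (L : List E) :
    esgn a b A L.reverse = esgn a b A L := by
  simp [esgn, List.prod_reverse]

lemma esgn_pm1 {a b : E → V} {A : Matrix V E ℝ}
    (hA1 : ∀ ℓ, pm1 (A (a ℓ) ℓ)) (hA2 : ∀ ℓ, pm1 (A (b ℓ) ℓ)) (L : List E) :
    pm1 (esgn a b A L) := by
  induction L with
  | nil => exact Or.inl rfl
  | cons ℓ L ih => simpa using ((hA1 ℓ).mul (hA2 ℓ)).neg.mul ih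

lemma IsWalk.append {a b : E → V} {x y z : V} {L L' : List E}
    (h : IsWalk a b x y L) (h' : IsWalk a b y z L') : IsWalk a b x z (L ++ L') := by
  induction h with
  | nil => exact h'
  | consA ℓ _ ih => exact IsWalk.consA ℓ (ih h')
  | consB ℓ _ ih => exact IsWalk.consB ℓ (ih h')

lemma IsWalk.single_ab (a b : E → V) (ℓ : E) : IsWalk a b (a ℓ) (b ℓ) [ℓ] :=
  IsWalk.consA ℓ (IsWalk.nil (b ℓ))

lemma IsWalk.single_ba (a b : E → V) (ℓ : E) : IsWalk a b (b ℓ) (a ℓ) [ℓ] :=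
  IsWalk.consB ℓ (IsWalk.nil (a ℓ))

lemma IsWalk.reverse {a b : E → V} {x y : V} {L : List E}
    (h : IsWalk a b x y L) : IsWalk a b y x L.reverse := by
  induction h with
  | nil => exact IsWalk.nil _
  | consA ℓ _ ih => simpa using ih.append (IsWalk.single_ba a b ℓ)
  | consB ℓ _ ih => simpa using ih.append (IsWalk.single_ab a b ℓ)

/-- The reachability relation of the multigraph. -/
def Rel (a b : E → V) (x y : V) : Prop := ∃ L, IsWalk a b x y L

lemma Rel.refl (a b : E → V) (x : V) : Rel a b x x := ⟨[], IsWalk.nil x⟩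

lemma Rel.symm' {a b : E → V} {x y : V} (h : Rel a b x y) : Rel a b y x :=
  h.elim fun L hL => ⟨L.reverse, hL.reverse⟩

lemma Rel.trans' {a b : E → V} {x y z : V} (h : Rel a b x y) (h' : Rel a b y z) :
    Rel a b x z := by
  obtain ⟨L, hL⟩ := h; obtain ⟨L', hL'⟩ := h'
  exact ⟨L ++ L', hL.append hL'⟩

lemma Rel.equiv (a b : E → V) : Equivalence (Rel a b) :=
  ⟨Rel.refl a b, Rel.symm', Rel.trans'⟩

lemma isWalk_nil_eq {a b : E → V} {x y : V} (h : IsWalk a b x y []) : x = y := by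
  cases h; rfl

lemma isWalk_cons_cases {a b : E → V} {x y : V} {ℓ : E} {L : List E}
    (h : IsWalk a b x y (ℓ :: L)) :
    (x = a ℓ ∧ IsWalk a b (b ℓ) y L) ∨ (x = b ℓ ∧ IsWalk a b (a ℓ) y L) := by
  cases h with
  | consA _ h => exact Or.inl ⟨rfl, h⟩
  | consB _ h => exact Or.inr ⟨rfl, h⟩


lemma det_sub_pm [Fintype V] [DecidableEq V] [Fintype E] [DecidableEq E]
    [Fintype I] [DecidableEq I] [Fintype I'] [DecidableEq I']
    (B : Matrix V E ℝ) (p : I ≃ V) (q : I ≃ E) (p' : I' ≃ V) (q' : I' ≃ E) :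
    PM ((B.submatrix ⇑p ⇑q).det) ((B.submatrix ⇑p' ⇑q').det) := by
  set e : I ≃ I' := p.trans p'.symm with he
  set fq : I ≃ I' := q.trans q'.symm with hfq
  have h1 : B.submatrix ⇑p ⇑q
      = ((B.submatrix ⇑p' ⇑q').submatrix ⇑e ⇑e).submatrix id ⇑(fq.trans e.symm) := by
    ext i j
    simp [Matrix.submatrix_apply, he, hfq]
  rw [h1]
  rw [Matrix.det_permute' (fq.trans e.symm) (((B.submatrix ⇑p' ⇑q').submatrix ⇑e ⇑e))]
  rw [Matrix.det_submatrix_equiv_self]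
  rcases Int.units_eq_one_or (Equiv.Perm.sign (fq.trans e.symm)) with h | h <;> rw [h] <;>
    simp [PM]


lemma det_minor [Fintype V] [DecidableEq V] [Fintype E] [DecidableEq E]
    (B : Matrix V E ℝ) (f : V ≃ E) (v : V) (ℓ₀ : E)
    (h0 : ∀ ℓ, ℓ ≠ ℓ₀ → B v ℓ = 0)
    (g : {x : V // x ≠ v} ≃ {ℓ : E // ℓ ≠ ℓ₀}) :
    PM ((B.submatrix id ⇑f).det)
      (B v ℓ₀ * ((B.submatrix (Subtype.val : {x : V // x ≠ v} → V)
          (Subtype.val : {ℓ : E // ℓ ≠ ℓ₀} → E)).submatrix id ⇑g).det) := by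
  obtain ⟨m, hm⟩ : ∃ m, Fintype.card V = m + 1 := by
    refine ⟨Fintype.card V - 1, ?_⟩
    have : 0 < Fintype.card V := Fintype.card_pos_iff.mpr ⟨v⟩
    omega
  have hE : Fintype.card E = m + 1 := by rw [← Fintype.card_congr f, hm]
  set e0 : V ≃ Fin (m + 1) := Fintype.equivFinOfCardEq hm with he0
  set e1 : V ≃ Fin (m + 1) := e0.trans (Equiv.swap (e0 v) 0) with he1
  have he1v : e1 v = 0 := by simp [he1, Equiv.swap_apply_left]
  set d0 : E ≃ Fin (m + 1) := Fintype.equivFinOfCardEq hE with hd0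
  set e2 : E ≃ Fin (m + 1) := d0.trans (Equiv.swap (d0 ℓ₀) 0) with he2
  have he2l : e2 ℓ₀ = 0 := by simp [he2, Equiv.swap_apply_left]
  set Mm : Matrix (Fin (m+1)) (Fin (m+1)) ℝ := B.submatrix ⇑e1.symm ⇑e2.symm with hM
  have step1 : PM ((B.submatrix id ⇑f).det) (Mm.det) := by
    have : B.submatrix id ⇑f = B.submatrix ⇑(Equiv.refl V) ⇑f := by
      rw [Equiv.coe_refl]
    rw [this]
    exact det_sub_pm B (Equiv.refl V) f e1.symm e2.symm
  have hrow : ∀ j : Fin (m+1), j ≠ 0 → Mm 0 j = 0 := by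
    intro j hj
    have h1 : e1.symm 0 = v := by rw [← he1v, Equiv.symm_apply_apply]
    have h2 : e2.symm j ≠ ℓ₀ := by
      intro hc
      apply hj
      rw [← he2l, ← hc, Equiv.apply_symm_apply]
    simp [hM, Matrix.submatrix_apply, h1, h0 _ h2]
  have hdet : Mm.det = Mm 0 0 * (Mm.submatrix Fin.succ Fin.succ).det := by
    rw [Matrix.det_succ_row_zero]
    rw [Finset.sum_eq_single_of_mem 0 (Finset.mem_univ _)]
    · simp [Fin.succAbove_zero]
    · intro j _ hj
      rw [hrow j hj]; ring
  have hM00 : Mm 0 0 = B v ℓ₀ := by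
    have h1 : e1.symm 0 = v := by rw [← he1v, Equiv.symm_apply_apply]
    have h2 : e2.symm 0 = ℓ₀ := by rw [← he2l, Equiv.symm_apply_apply]
    simp [hM, Matrix.submatrix_apply, h1, h2]
  -- the equivs from Fin m to the subtypes
  have hp2ne : ∀ i : Fin m, e1.symm i.succ ≠ v := by
    intro i hc
    have : i.succ = e1 v := by rw [← hc, Equiv.apply_symm_apply]
    rw [he1v] at this
    exact Fin.succ_ne_zero i this
  have hq2ne : ∀ i : Fin m, e2.symm i.succ ≠ ℓ₀ := by
    intro i hc
    have : i.succ = e2 ℓ₀ := by rw [← hc, Equiv.apply_symm_apply]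
    rw [he2l] at this
    exact Fin.succ_ne_zero i this
  set p₂ : Fin m ≃ {x : V // x ≠ v} :=
    { toFun := fun i => ⟨e1.symm i.succ, hp2ne i⟩
      invFun := fun x => (e1 x.1).pred (by
        intro hc
        exact x.2 (by rw [← he1v] at hc; exact e1.injective hc))
      left_inv := fun i => by simp
      right_inv := fun x => by ext; simp } with hp₂
  set q₂ : Fin m ≃ {ℓ : E // ℓ ≠ ℓ₀} :=
    { toFun := fun i => ⟨e2.symm i.succ, hq2ne i⟩
      invFun := fun x => (e2 x.1).pred (by
        intro hc
        exact x.2 (by rw [← he2l] at hc; exact e2.injective hc))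
      left_inv := fun i => by simp
      right_inv := fun x => by ext; simp } with hq₂
  have hsub : Mm.submatrix Fin.succ Fin.succ
      = (B.submatrix (Subtype.val : {x : V // x ≠ v} → V)
          (Subtype.val : {ℓ : E // ℓ ≠ ℓ₀} → E)).submatrix ⇑p₂ ⇑q₂ := by
    ext i j
    simp [hM, Matrix.submatrix_apply, hp₂, hq₂]
  have step2 : PM ((Mm.submatrix Fin.succ Fin.succ).det)
      (((B.submatrix (Subtype.val : {x : V // x ≠ v} → V)
          (Subtype.val : {ℓ : E // ℓ ≠ ℓ₀} → E)).submatrix id ⇑g).det) := by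
    rw [hsub]
    have : (B.submatrix (Subtype.val : {x : V // x ≠ v} → V)
          (Subtype.val : {ℓ : E // ℓ ≠ ℓ₀} → E)).submatrix id ⇑g
        = (B.submatrix (Subtype.val : {x : V // x ≠ v} → V)
          (Subtype.val : {ℓ : E // ℓ ≠ ℓ₀} → E)).submatrix ⇑(Equiv.refl _) ⇑g := by
      rw [Equiv.coe_refl]
    rw [this]
    exact det_sub_pm _ p₂ q₂ (Equiv.refl _) g
  refine step1.trans ?_
  rw [hdet, hM00]
  exact step2.cmul (B v ℓ₀)



lemma det_transpose_sub_pm {V E : Type} [Fintype V] [DecidableEq V] [Fintype E] [DecidableEq E]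
    (B : Matrix V E ℝ) (g : E ≃ V) (f : V ≃ E) :
    PM ((Bᵀ.submatrix id ⇑g).det) ((B.submatrix id ⇑f).det) := by
  have h : Bᵀ.submatrix id ⇑g = (B.submatrix ⇑g id)ᵀ := by
    ext i j; simp [Matrix.submatrix_apply, Matrix.transpose_apply]
  rw [h, Matrix.det_transpose]
  have h2 : B.submatrix ⇑g id = B.submatrix ⇑g ⇑(Equiv.refl E) := by rw [Equiv.coe_refl]
  have h3 : B.submatrix id ⇑f = B.submatrix ⇑(Equiv.refl V) ⇑f := by rw [Equiv.coe_refl]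
  rw [h2, h3]
  exact det_sub_pm B g (Equiv.refl E) (Equiv.refl V) f

lemma quot_finite {α : Type} [Finite α] (R : α → α → Prop) : Finite (Quot R) :=
  Finite.of_surjective (Quot.mk R) (fun q => by
    induction q using Quot.ind with | _ a => exact ⟨a, rfl⟩)

lemma card_quot_congr {α β : Type} (g : α → β) (R : α → α → Prop) (S : β → β → Prop)
    (hS : Equivalence S)
    (hmap : ∀ x y, R x y → S (g x) (g y))
    (hinj : ∀ x y, S (g x) (g y) → R x y)
    (hsurj : ∀ z : β, ∃ x : α, S (g x) z) :
    Nat.card (Quot R) = Nat.card (Quot S) := by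
  refine Nat.card_congr (Equiv.ofBijective (Quot.map g hmap) ⟨?_, ?_⟩)
  · intro x y h
    induction x using Quot.ind with | _ x =>
    induction y using Quot.ind with | _ y =>
    have h' : Quot.mk S (g x) = Quot.mk S (g y) := h
    rw [Quot.eq] at h'
    exact Quot.sound (hinj _ _ ((Equivalence.eqvGen_iff hS).mp h'))
  · intro q
    induction q using Quot.ind with | _ z =>
    obtain ⟨x, hx⟩ := hsurj z
    exact ⟨Quot.mk R x, Quot.sound hx⟩

lemma card_quot_plus_one {α β : Type} [Finite α] (g : α → β) (R : α → α → Prop)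
    (S : β → β → Prop) (hS : Equivalence S) (v₀ : β)
    (hmap : ∀ x y, R x y → S (g x) (g y))
    (hinj : ∀ x y, S (g x) (g y) → R x y)
    (hv₀ : ∀ x, ¬ S (g x) v₀)
    (hsurj : ∀ z : β, S v₀ z ∨ ∃ x : α, S (g x) z) :
    Nat.card (Quot S) = Nat.card (Quot R) + 1 := by
  haveI : Finite (Quot R) := quot_finite R
  have hopt : Nat.card (Option (Quot R)) = Nat.card (Quot R) + 1 := Finite.card_option
  rw [← hopt]
  refine Nat.card_congr (Equiv.ofBijective
    (fun o => Option.rec (Quot.mk S v₀) (Quot.map g hmap) o) ⟨?_, ?_⟩).symm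
  · intro o1 o2 h
    match o1, o2 with
    | none, none => rfl
    | none, some q =>
      exfalso
      induction q using Quot.ind with | _ x =>
      have h' : Quot.mk S v₀ = Quot.mk S (g x) := h
      rw [Quot.eq] at h'
      exact hv₀ x (hS.symm ((Equivalence.eqvGen_iff hS).mp h'))
    | some q, none =>
      exfalso
      induction q using Quot.ind with | _ x =>
      have h' : Quot.mk S (g x) = Quot.mk S v₀ := h
      rw [Quot.eq] at h'
      exact hv₀ x ((Equivalence.eqvGen_iff hS).mp h')
    | some q1, some q2 =>
      congr 1
      induction q1 using Quot.ind with | _ x =>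
      induction q2 using Quot.ind with | _ y =>
      have h' : Quot.mk S (g x) = Quot.mk S (g y) := h
      rw [Quot.eq] at h'
      exact Quot.sound (hinj _ _ ((Equivalence.eqvGen_iff hS).mp h'))
  · intro q
    induction q using Quot.ind with | _ z =>
    rcases hsurj z with h | ⟨x, hx⟩
    · exact ⟨none, Quot.sound h⟩
    · exact ⟨some (Quot.mk R x), Quot.sound hx⟩


section Swap
variable (a b : E → V) (s : E → Prop) [DecidablePred s]

/-- Endpoint maps with per-edge swap according to `s`. -/
def aS : E → V := fun ℓ => if s ℓ then b ℓ else a ℓ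
def bS : E → V := fun ℓ => if s ℓ then a ℓ else b ℓ

lemma isWalk_swap {x y : V} {L : List E} (h : IsWalk a b x y L) :
    IsWalk (aS a b s) (bS a b s) x y L := by
  induction h with
  | nil v => exact IsWalk.nil v
  | consA ℓ h ih =>
    by_cases hs : s ℓ
    · have h1 : a ℓ = bS a b s ℓ := by simp [bS, hs]
      have h2 : b ℓ = aS a b s ℓ := by simp [aS, hs]
      rw [h1]; rw [h2] at ih; exact IsWalk.consB ℓ ih
    · have h1 : a ℓ = aS a b s ℓ := by simp [aS, hs]
      have h2 : b ℓ = bS a b s ℓ := by simp [bS, hs]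
      rw [h1]; rw [h2] at ih; exact IsWalk.consA ℓ ih
  | consB ℓ h ih =>
    by_cases hs : s ℓ
    · have h1 : b ℓ = aS a b s ℓ := by simp [aS, hs]
      have h2 : a ℓ = bS a b s ℓ := by simp [bS, hs]
      rw [h1]; rw [h2] at ih; exact IsWalk.consA ℓ ih
    · have h1 : b ℓ = bS a b s ℓ := by simp [bS, hs]
      have h2 : a ℓ = aS a b s ℓ := by simp [aS, hs]
      rw [h1]; rw [h2] at ih; exact IsWalk.consB ℓ ih

lemma isWalk_swap_rev {x y : V} {L : List E} (h : IsWalk (aS a b s) (bS a b s) x y L) :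
    IsWalk a b x y L := by
  have h1 : aS (aS a b s) (bS a b s) s = a := by
    funext ℓ; by_cases hs : s ℓ <;> simp [aS, bS, hs]
  have h2 : bS (aS a b s) (bS a b s) s = b := by
    funext ℓ; by_cases hs : s ℓ <;> simp [aS, bS, hs]
  have := isWalk_swap (aS a b s) (bS a b s) s h
  rwa [h1, h2] at this

lemma esgn_swap (A : Matrix V E ℝ) (L : List E) :
    esgn (aS a b s) (bS a b s) A L = esgn a b A L := by
  unfold esgn
  congr 1
  apply List.map_congr_left
  intro ℓ _
  by_cases hs : s ℓ <;> simp [aS, bS, hs, mul_comm]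

end Swap

section Deg
variable [Fintype E] [DecidableEq V] (a b : E → V)

def degF (x : V) : Finset E := Finset.univ.filter (fun ℓ => a ℓ = x ∨ b ℓ = x)

lemma degF_swap (s : E → Prop) [DecidablePred s] (x : V) :
    degF (aS a b s) (bS a b s) x = degF a b x := by
  unfold degF
  apply Finset.filter_congr
  intro ℓ _
  by_cases hs : s ℓ <;> simp [aS, bS, hs, or_comm]

lemma sum_degF [Fintype V] (hab : ∀ ℓ, a ℓ ≠ b ℓ) :
    ∑ x : V, (degF a b x).card = 2 * Fintype.card E := by
  have h1 : ∀ x : V, (degF a b x).card = ∑ ℓ : E, if a ℓ = x ∨ b ℓ = x then 1 else 0 := by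
    intro x
    rw [degF, Finset.card_filter]
  have h2 : ∑ x : V, (degF a b x).card
      = ∑ ℓ : E, ∑ x : V, if a ℓ = x ∨ b ℓ = x then 1 else 0 := by
    rw [Finset.sum_comm]
    exact Finset.sum_congr rfl fun x _ => h1 x
  rw [h2]
  have h3 : ∀ ℓ : E, (∑ x : V, if a ℓ = x ∨ b ℓ = x then 1 else 0) = 2 := by
    intro ℓ
    rw [← Finset.card_filter]
    have : Finset.univ.filter (fun x => a ℓ = x ∨ b ℓ = x) = {a ℓ, b ℓ} := by
      ext x
      simp [eq_comm]
    rw [this, Finset.card_pair (hab ℓ)]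
  rw [Finset.sum_congr rfl fun ℓ _ => h3 ℓ]
  simp [Finset.sum_const, mul_comm]

end Deg

/-- The main induction statement. -/
def KeyStmt (k : ℕ) : Prop :=
  ∀ (V E : Type) [Fintype V] [DecidableEq V] [Fintype E] [DecidableEq E]
    (a b : E → V) (A : Matrix V E ℝ),
    Fintype.card V = k →
    (∀ ℓ, a ℓ ≠ b ℓ) →
    (∀ ℓ, A (a ℓ) ℓ = 1 ∨ A (a ℓ) ℓ = -1) →
    (∀ ℓ, A (b ℓ) ℓ = 1 ∨ A (b ℓ) ℓ = -1) →
    (∀ ℓ x, x ≠ a ℓ → x ≠ b ℓ → A x ℓ = 0) →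
    (∀ x, ∃ L, IsWalk a b x x L ∧ esgn a b A L = -1) →
    ∀ f : V ≃ E,
      PM ((A.submatrix id ⇑f).det) (2 ^ Nat.card (Quot (Rel a b)))


section CaseLeaf
variable {V E : Type} [Fintype V] [DecidableEq V] [Fintype E] [DecidableEq E]
variable {a b : E → V} {A : Matrix V E ℝ} {v : V} {ℓ₀ : E}

/-- Remove a leaf vertex `v` (unique incident edge `ℓ₀`, normalized `a ℓ₀ = v`)
from walks avoiding `v` at the endpoints. -/
lemma surgery_leaf (hA1 : ∀ ℓ, pm1 (A (a ℓ) ℓ)) (hA2 : ∀ ℓ, pm1 (A (b ℓ) ℓ))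
    (hv : ∀ ℓ, a ℓ = v ∨ b ℓ = v → ℓ = ℓ₀) (hva : a ℓ₀ = v) (hbv : ∀ ℓ, b ℓ ≠ v) :
    ∀ (m : ℕ) (L : List E), L.length ≤ m → ∀ (x y : V) (hx : x ≠ v) (hy : y ≠ v),
      IsWalk a b x y L →
      ∃ L', IsWalk (fun ℓ : {ℓ : E // ℓ ≠ ℓ₀} => (⟨a ℓ.1, fun hc => ℓ.2 (hv ℓ.1 (Or.inl hc))⟩ :
              {x : V // x ≠ v}))
            (fun ℓ : {ℓ : E // ℓ ≠ ℓ₀} => (⟨b ℓ.1, hbv ℓ.1⟩ : {x : V // x ≠ v}))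
            ⟨x, hx⟩ ⟨y, hy⟩ L' ∧
          esgn (fun ℓ : {ℓ : E // ℓ ≠ ℓ₀} => (⟨a ℓ.1, fun hc => ℓ.2 (hv ℓ.1 (Or.inl hc))⟩ :
              {x : V // x ≠ v}))
            (fun ℓ : {ℓ : E // ℓ ≠ ℓ₀} => (⟨b ℓ.1, hbv ℓ.1⟩ : {x : V // x ≠ v}))
            (A.submatrix Subtype.val Subtype.val) L' = esgn a b A L := by
  set a' : {ℓ : E // ℓ ≠ ℓ₀} → {x : V // x ≠ v} :=
    fun ℓ => ⟨a ℓ.1, fun hc => ℓ.2 (hv ℓ.1 (Or.inl hc))⟩ with ha'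
  set b' : {ℓ : E // ℓ ≠ ℓ₀} → {x : V // x ≠ v} := fun ℓ => ⟨b ℓ.1, hbv ℓ.1⟩ with hb'
  intro m
  induction m with
  | zero =>
    intro L hlen x y hx hy hw
    have : L = [] := List.length_eq_zero_iff.mp (Nat.le_zero.mp hlen)
    subst this
    have hxy := isWalk_nil_eq hw
    subst hxy
    exact ⟨[], IsWalk.nil _, by rw [esgn_nil, esgn_nil]⟩
  | succ m ih =>
    intro L hlen x y hx hy hw
    match L with
    | [] =>
      have hxy := isWalk_nil_eq hw
      subst hxy
      exact ⟨[], IsWalk.nil _, by rw [esgn_nil, esgn_nil]⟩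
    | ℓ :: L₁ =>
      rcases isWalk_cons_cases hw with ⟨hxa, hw₁⟩ | ⟨hxb, hw₁⟩
      · -- step x = a ℓ → b ℓ
        have hℓ : ℓ ≠ ℓ₀ := fun hc => hx (by rw [hxa, hc, hva])
        have hlen₁ : L₁.length ≤ m := by simp at hlen; omega
        obtain ⟨L', hL', hs⟩ := ih L₁ hlen₁ (b ℓ) y (hbv ℓ) hy hw₁
        refine ⟨⟨ℓ, hℓ⟩ :: L', ?_, ?_⟩
        · have h1 : (⟨x, hx⟩ : {x : V // x ≠ v}) = a' ⟨ℓ, hℓ⟩ := Subtype.ext hxa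
          rw [h1]
          exact IsWalk.consA _ hL'
        · rw [esgn_cons, esgn_cons, hs]
          rfl
      · -- step x = b ℓ → a ℓ
        by_cases haℓ : a ℓ = v
        · -- ℓ = ℓ₀, we entered the leaf; the walk must come straight back
          have hℓ0 : ℓ = ℓ₀ := hv ℓ (Or.inl haℓ)
          rw [haℓ] at hw₁
          match L₁ with
          | [] => exact absurd (isWalk_nil_eq hw₁).symm hy
          | ℓ' :: L₂ =>
            rcases isWalk_cons_cases hw₁ with ⟨h1, hw₂⟩ | ⟨h1, hw₂⟩
            · have hℓ0' : ℓ' = ℓ₀ := hv ℓ' (Or.inl h1.symm)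
              have hbb : b ℓ' = x := by rw [hℓ0', ← hℓ0, ← hxb]
              rw [hbb] at hw₂
              have hlen₂ : L₂.length ≤ m := by simp at hlen; omega
              obtain ⟨L', hL', hs⟩ := ih L₂ hlen₂ x y hx hy hw₂
              refine ⟨L', hL', ?_⟩
              rw [hs, esgn_cons, esgn_cons, hℓ0, hℓ0']
              have hsq := pm1.sq (((hA1 ℓ₀).mul (hA2 ℓ₀)).neg)
              rw [← mul_assoc, hsq, one_mul]
            · exact absurd h1.symm (hbv ℓ')
        · have hℓ : ℓ ≠ ℓ₀ := fun hc => haℓ (by rw [hc, hva])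
          have hlen₁ : L₁.length ≤ m := by simp at hlen; omega
          obtain ⟨L', hL', hs⟩ := ih L₁ hlen₁ (a ℓ) y haℓ hy hw₁
          refine ⟨⟨ℓ, hℓ⟩ :: L', ?_, ?_⟩
          · have h1 : (⟨x, hx⟩ : {x : V // x ≠ v}) = b' ⟨ℓ, hℓ⟩ := Subtype.ext hxb
            rw [h1]
            exact IsWalk.consB _ hL'
          · rw [esgn_cons, esgn_cons, hs]
            rfl

lemma case_leaf {k : ℕ} (hk : Fintype.card V = k)
    (hab : ∀ ℓ, a ℓ ≠ b ℓ)
    (hA1 : ∀ ℓ, A (a ℓ) ℓ = 1 ∨ A (a ℓ) ℓ = -1)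
    (hA2 : ∀ ℓ, A (b ℓ) ℓ = 1 ∨ A (b ℓ) ℓ = -1)
    (hA0 : ∀ ℓ x, x ≠ a ℓ → x ≠ b ℓ → A x ℓ = 0)
    (hneg : ∀ x, ∃ L, IsWalk a b x x L ∧ esgn a b A L = -1)
    (hv : ∀ ℓ, a ℓ = v ∨ b ℓ = v → ℓ = ℓ₀) (hva : a ℓ₀ = v) (hbv : ∀ ℓ, b ℓ ≠ v)
    (IH : KeyStmt (k - 1)) (f : V ≃ E) :
    PM ((A.submatrix id ⇑f).det) (2 ^ Nat.card (Quot (Rel a b))) := by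
  set a' : {ℓ : E // ℓ ≠ ℓ₀} → {x : V // x ≠ v} :=
    fun ℓ => ⟨a ℓ.1, fun hc => ℓ.2 (hv ℓ.1 (Or.inl hc))⟩ with ha'
  set b' : {ℓ : E // ℓ ≠ ℓ₀} → {x : V // x ≠ v} := fun ℓ => ⟨b ℓ.1, hbv ℓ.1⟩ with hb'
  set A' : Matrix {x : V // x ≠ v} {ℓ : E // ℓ ≠ ℓ₀} ℝ := A.submatrix Subtype.val Subtype.val
    with hA'
  have hkV : Fintype.card {x : V // x ≠ v} = k - 1 := by
    have h1 : Fintype.card {x : V // x ≠ v} = Fintype.card {x : V // ¬ x = v} :=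
      Fintype.card_congr (Equiv.refl _)
    rw [h1, Fintype.card_subtype_compl, Fintype.card_subtype_eq, hk]
  have hkE : Fintype.card {ℓ : E // ℓ ≠ ℓ₀} = k - 1 := by
    have h1 : Fintype.card {ℓ : E // ℓ ≠ ℓ₀} = Fintype.card {ℓ : E // ¬ ℓ = ℓ₀} :=
      Fintype.card_congr (Equiv.refl _)
    rw [h1, Fintype.card_subtype_compl, Fintype.card_subtype_eq, ← Fintype.card_congr f, hk]
  have f' : {x : V // x ≠ v} ≃ {ℓ : E // ℓ ≠ ℓ₀} := Fintype.equivOfCardEq (by rw [hkV, hkE])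
  -- hypotheses for the minor
  have hab' : ∀ ℓ, a' ℓ ≠ b' ℓ := fun ℓ hc => hab ℓ.1 (congrArg Subtype.val hc)
  have hA1' : ∀ ℓ, A' (a' ℓ) ℓ = 1 ∨ A' (a' ℓ) ℓ = -1 := fun ℓ => hA1 ℓ.1
  have hA2' : ∀ ℓ, A' (b' ℓ) ℓ = 1 ∨ A' (b' ℓ) ℓ = -1 := fun ℓ => hA2 ℓ.1
  have hA0' : ∀ ℓ x, x ≠ a' ℓ → x ≠ b' ℓ → A' x ℓ = 0 := by
    intro ℓ x h1 h2
    exact hA0 ℓ.1 x.1 (fun hc => h1 (Subtype.ext hc)) (fun hc => h2 (Subtype.ext hc))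
  have hneg' : ∀ x, ∃ L, IsWalk a' b' x x L ∧ esgn a' b' A' L = -1 := by
    intro x
    obtain ⟨L, hL, hs⟩ := hneg x.1
    obtain ⟨L', hL', hs'⟩ := surgery_leaf (fun ℓ => hA1 ℓ) (fun ℓ => hA2 ℓ) hv hva hbv
      L.length L le_rfl x.1 x.1 x.2 x.2 hL
    exact ⟨L', by simpa using hL', by rw [hs', hs]⟩
  have hIH := IH _ _ a' b' A' hkV hab' hA1' hA2' hA0' hneg' f'
  -- determinant expansion
  have h0 : ∀ ℓ, ℓ ≠ ℓ₀ → A v ℓ = 0 := by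
    intro ℓ hℓ
    refine hA0 ℓ v (fun hc => hℓ (hv ℓ (Or.inl hc.symm))) (fun hc => hbv ℓ hc.symm)
  have hdm := det_minor A f v ℓ₀ h0 f'
  have hvpm : pm1 (A v ℓ₀) := by rw [← hva]; exact hA1 ℓ₀
  -- component count
  have hcc : Nat.card (Quot (Rel a' b')) = Nat.card (Quot (Rel a b)) := by
    refine card_quot_congr Subtype.val (Rel a' b') (Rel a b) (Rel.equiv a b) ?_ ?_ ?_
    · intro x y hxy
      obtain ⟨L, hL⟩ := hxy
      refine ⟨L.map Subtype.val, ?_⟩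
      induction hL with
      | nil => exact IsWalk.nil _
      | consA ℓ h ihh => exact IsWalk.consA ℓ.1 ihh
      | consB ℓ h ihh => exact IsWalk.consB ℓ.1 ihh
    · intro x y hxy
      obtain ⟨L, hL⟩ := hxy
      obtain ⟨L', hL', _⟩ := surgery_leaf (fun ℓ => hA1 ℓ) (fun ℓ => hA2 ℓ) hv hva hbv
        L.length L le_rfl x.1 y.1 x.2 y.2 hL
      exact ⟨L', by simpa using hL'⟩
    · intro z
      by_cases hz : z = v
      · subst hz
        refine ⟨⟨b ℓ₀, hbv ℓ₀⟩, ⟨[ℓ₀], ?_⟩⟩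
        exact IsWalk.consB ℓ₀ (hva ▸ IsWalk.nil (a ℓ₀))
      · exact ⟨⟨z, hz⟩, Rel.refl a b z⟩
  rw [← hcc]
  refine hdm.trans (pm1_mul_PM hvpm ?_)
  exact hIH

end CaseLeaf


section CaseDeg2
variable {V E : Type} [Fintype V] [DecidableEq V] [Fintype E] [DecidableEq E]
variable {a b : E → V} {A : Matrix V E ℝ} {v : V} {ℓ₁ ℓ₂ : E}

lemma case_deg2 {k : ℕ} (hk : Fintype.card V = k)
    (hab : ∀ ℓ, a ℓ ≠ b ℓ)
    (hA1 : ∀ ℓ, A (a ℓ) ℓ = 1 ∨ A (a ℓ) ℓ = -1)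
    (hA2 : ∀ ℓ, A (b ℓ) ℓ = 1 ∨ A (b ℓ) ℓ = -1)
    (hA0 : ∀ ℓ x, x ≠ a ℓ → x ≠ b ℓ → A x ℓ = 0)
    (hneg : ∀ x, ∃ L, IsWalk a b x x L ∧ esgn a b A L = -1)
    (h12 : ℓ₁ ≠ ℓ₂)
    (hv : ∀ ℓ, a ℓ = v ∨ b ℓ = v → ℓ = ℓ₁ ∨ ℓ = ℓ₂)
    (ha1 : a ℓ₁ = v) (ha2 : a ℓ₂ = v) (hbv : ∀ ℓ, b ℓ ≠ v)
    (hdeg : ∀ z, (degF a b z).card = 2)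
    (IH : ∀ m, m < k → KeyStmt m) (f : V ≃ E) :
    PM ((A.submatrix id ⇑f).det) (2 ^ Nat.card (Quot (Rel a b))) := by
  have hk1 : 0 < k := by rw [← hk]; exact Fintype.card_pos_iff.mpr ⟨v⟩
  have hA1p : ∀ ℓ, pm1 (A (a ℓ) ℓ) := hA1
  have hA2p : ∀ ℓ, pm1 (A (b ℓ) ℓ) := hA2
  have hA1v : pm1 (A v ℓ₁) := by rw [← ha1]; exact hA1 ℓ₁
  have hA2v : pm1 (A v ℓ₂) := by rw [← ha2]; exact hA1p ℓ₂
  set c : ℝ := A v ℓ₁ * A v ℓ₂ with hcdef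
  have hcpm : pm1 c := hA1v.mul hA2v
  set A₁ : Matrix V E ℝ := fun y ℓ => if ℓ = ℓ₁ then A y ℓ₁ - c * A y ℓ₂ else A y ℓ with hA₁def
  have hA₁ne : ∀ (y : V) (ℓ : E), ℓ ≠ ℓ₁ → A₁ y ℓ = A y ℓ := by
    intro y ℓ hℓ; simp [hA₁def, hℓ]
  have hA₁eq : ∀ y : V, A₁ y ℓ₁ = A y ℓ₁ - c * A y ℓ₂ := by intro y; simp [hA₁def]
  -- the column operation does not change the determinant
  have hdetcol : (A₁.submatrix id ⇑f).det = (A.submatrix id ⇑f).det := by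
    have hij : f.symm ℓ₁ ≠ f.symm ℓ₂ := fun hc => h12 (f.symm.injective hc)
    have hup : A₁.submatrix id ⇑f = Matrix.updateCol (A.submatrix id ⇑f) (f.symm ℓ₁)
        (fun y => (A.submatrix id ⇑f) y (f.symm ℓ₁) + (-c) • (A.submatrix id ⇑f) y (f.symm ℓ₂)) := by
      ext y j
      by_cases hj : f j = ℓ₁
      · have hj' : j = f.symm ℓ₁ := by rw [← hj, Equiv.symm_apply_apply]
        rw [Matrix.updateCol_apply, if_pos hj']
        simp only [Matrix.submatrix_apply, id_eq, Equiv.apply_symm_apply, smul_eq_mul]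
        rw [hA₁def]
        simp only [hj, if_pos]
        ring
      · have hj' : j ≠ f.symm ℓ₁ := fun hc => hj (by rw [hc, Equiv.apply_symm_apply])
        rw [Matrix.updateCol_apply, if_neg hj']
        simp only [Matrix.submatrix_apply, id_eq]
        exact hA₁ne y (f j) hj
    rw [hup]
    exact Matrix.det_updateCol_add_smul_self _ hij (-c)
  -- row v of A₁ vanishes except at ℓ₂
  have hrow : ∀ ℓ, ℓ ≠ ℓ₂ → A₁ v ℓ = 0 := by
    intro ℓ hℓ
    by_cases hℓ1 : ℓ = ℓ₁
    · rw [hℓ1, hA₁eq, hcdef]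
      linear_combination (-(A v ℓ₁)) * (pm1.sq hA2v)
    · rw [hA₁ne v ℓ hℓ1]
      refine hA0 ℓ v (fun hc => ?_) (fun hc => hbv ℓ hc.symm)
      rcases hv ℓ (Or.inl hc.symm) with h | h
      · exact hℓ1 h
      · exact hℓ h
  have hA₁vℓ₂ : A₁ v ℓ₂ = A v ℓ₂ := hA₁ne v ℓ₂ (fun hc => h12 hc.symm)
  have hA₁vpm : pm1 (A₁ v ℓ₂) := by rw [hA₁vℓ₂]; exact hA2v
  -- cardinalities
  have hkV' : Fintype.card {x : V // x ≠ v} = k - 1 := by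
    have h1 : Fintype.card {x : V // x ≠ v} = Fintype.card {x : V // ¬ x = v} :=
      Fintype.card_congr (Equiv.refl _)
    rw [h1, Fintype.card_subtype_compl, Fintype.card_subtype_eq, hk]
  have hkE' : Fintype.card {ℓ : E // ℓ ≠ ℓ₂} = k - 1 := by
    have h1 : Fintype.card {ℓ : E // ℓ ≠ ℓ₂} = Fintype.card {ℓ : E // ¬ ℓ = ℓ₂} :=
      Fintype.card_congr (Equiv.refl _)
    rw [h1, Fintype.card_subtype_compl, Fintype.card_subtype_eq, ← Fintype.card_congr f, hk]
  have f' : {x : V // x ≠ v} ≃ {ℓ : E // ℓ ≠ ℓ₂} := Fintype.equivOfCardEq (by rw [hkV', hkE'])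
  have hdm := det_minor A₁ f v ℓ₂ hrow f'
  rw [hdetcol] at hdm
  set A' : Matrix {x : V // x ≠ v} {ℓ : E // ℓ ≠ ℓ₂} ℝ := A₁.submatrix Subtype.val Subtype.val
    with hA'def
  by_cases huw : b ℓ₁ = b ℓ₂
  · -- two-cycle case
    -- TWO-CYCLE CASE
    have hb2 : b ℓ₂ = b ℓ₁ := huw.symm
    have hx₀v : b ℓ₁ ≠ v := hbv ℓ₁
    have hvx : ∀ ℓ, a ℓ = b ℓ₁ ∨ b ℓ = b ℓ₁ → ℓ = ℓ₁ ∨ ℓ = ℓ₂ := by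
      have hsub : ({ℓ₁, ℓ₂} : Finset E) ⊆ degF a b (b ℓ₁) := by
        intro ℓ hℓ
        rcases Finset.mem_insert.mp hℓ with h | h
        · subst h; exact Finset.mem_filter.mpr ⟨Finset.mem_univ _, Or.inr rfl⟩
        · rw [Finset.mem_singleton] at h; subst h
          exact Finset.mem_filter.mpr ⟨Finset.mem_univ _, Or.inr hb2⟩
      have heq : ({ℓ₁, ℓ₂} : Finset E) = degF a b (b ℓ₁) :=
        Finset.eq_of_subset_of_card_le hsub (by rw [hdeg (b ℓ₁), Finset.card_pair h12])
      intro ℓ h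
      have : ℓ ∈ degF a b (b ℓ₁) := Finset.mem_filter.mpr ⟨Finset.mem_univ _, h⟩
      rw [← heq] at this
      simpa using this
    -- alternation in the 2-cycle component
    have key2 : ∀ (L : List E) (p q : V), IsWalk a b p q L → (p = v ∨ p = b ℓ₁) →
        (-(A (a ℓ₂) ℓ₂ * A (b ℓ₂) ℓ₂)) = (-(A (a ℓ₁) ℓ₁ * A (b ℓ₁) ℓ₁)) →
        esgn a b A L = (-(A (a ℓ₁) ℓ₁ * A (b ℓ₁) ℓ₁)) ^ L.length ∧
          ((Even L.length ∧ q = p) ∨ (¬ Even L.length ∧ q ≠ p ∧ (q = v ∨ q = b ℓ₁))) := by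
      intro L p q hL
      induction hL with
      | nil v' =>
        intro _ _
        exact ⟨by rw [esgn_nil]; simp, Or.inl ⟨Even.zero, rfl⟩⟩
      | @consA w Lw ℓ h ihh =>
        intro hp hσ
        have hℓ : ℓ = ℓ₁ ∨ ℓ = ℓ₂ :=
          hp.elim (fun h' => hv ℓ (Or.inl h')) (fun h' => hvx ℓ (Or.inl h'))
        have hae : a ℓ = v := by
          rcases hℓ with h' | h'
          · rw [h']; exact ha1
          · rw [h']; exact ha2
        have hbe : b ℓ = b ℓ₁ := by
          rcases hℓ with h' | h'
          · rw [h']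
          · rw [h']; exact hb2
        have hfac : -(A (a ℓ) ℓ * A (b ℓ) ℓ) = -(A (a ℓ₁) ℓ₁ * A (b ℓ₁) ℓ₁) := by
          rcases hℓ with h' | h'
          · rw [h']
          · rw [h']; exact hσ
        obtain ⟨hs, hpar⟩ := ihh (Or.inr hbe) hσ
        constructor
        · rw [esgn_cons, hs, hfac, List.length_cons, pow_succ]; ring
        · rcases hpar with ⟨he, hq⟩ | ⟨he, hq, hqm⟩
          · refine Or.inr ⟨?_, ?_, ?_⟩
            · rw [List.length_cons, Nat.even_add_one]; exact fun hc => hc he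
            · rw [hq, hbe, hae]; exact fun hc => hx₀v hc
            · rw [hq, hbe]; exact Or.inr rfl
          · rw [hbe] at hq
            have hqv : w = v := by
              rcases hqm with h' | h'
              · exact h'
              · exact absurd h' hq
            refine Or.inl ⟨?_, by rw [hqv, hae]⟩
            rw [List.length_cons, Nat.even_add_one]
            exact he
      | @consB w Lw ℓ h ihh =>
        intro hp hσ
        have hbe : b ℓ = b ℓ₁ := hp.resolve_left (hbv ℓ)
        have hℓ : ℓ = ℓ₁ ∨ ℓ = ℓ₂ := hvx ℓ (Or.inr hbe)
        have hae : a ℓ = v := by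
          rcases hℓ with h' | h'
          · rw [h']; exact ha1
          · rw [h']; exact ha2
        have hfac : -(A (a ℓ) ℓ * A (b ℓ) ℓ) = -(A (a ℓ₁) ℓ₁ * A (b ℓ₁) ℓ₁) := by
          rcases hℓ with h' | h'
          · rw [h']
          · rw [h']; exact hσ
        obtain ⟨hs, hpar⟩ := ihh (Or.inl hae) hσ
        constructor
        · rw [esgn_cons, hs, hfac, List.length_cons, pow_succ]; ring
        · rcases hpar with ⟨he, hq⟩ | ⟨he, hq, hqm⟩
          · refine Or.inr ⟨?_, ?_, ?_⟩
            · rw [List.length_cons, Nat.even_add_one]; exact fun hc => hc he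
            · rw [hq, hae, hbe]; exact fun hc => hx₀v hc.symm
            · rw [hq, hae]; exact Or.inl rfl
          · rw [hae] at hq
            have hqx : w = b ℓ₁ := by
              rcases hqm with h' | h'
              · exact absurd h' hq
              · exact h'
            refine Or.inl ⟨?_, by rw [hqx, hbe]⟩
            rw [List.length_cons, Nat.even_add_one]
            exact he
    -- the two parallel edges have opposite signs
    have hs12 : -(A (a ℓ₁) ℓ₁ * A (b ℓ₁) ℓ₁) * -(A (a ℓ₂) ℓ₂ * A (b ℓ₂) ℓ₂) = -1 := by
      have s1pm : pm1 (-(A (a ℓ₁) ℓ₁ * A (b ℓ₁) ℓ₁)) := ((hA1p ℓ₁).mul (hA2p ℓ₁)).neg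
      have s2pm : pm1 (-(A (a ℓ₂) ℓ₂ * A (b ℓ₂) ℓ₂)) := ((hA1p ℓ₂).mul (hA2p ℓ₂)).neg
      rcases s1pm.mul s2pm with h | h
      · exfalso
        have hσ : (-(A (a ℓ₂) ℓ₂ * A (b ℓ₂) ℓ₂)) = (-(A (a ℓ₁) ℓ₁ * A (b ℓ₁) ℓ₁)) :=
          mul_left_cancel₀ s1pm.ne_zero (h.trans s1pm.sq.symm)
        obtain ⟨L, hL, hsgn⟩ := hneg v
        obtain ⟨hs, hpar⟩ := key2 L v v hL (Or.inl rfl) hσ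
        have heL : Even L.length := by
          rcases hpar with ⟨he, _⟩ | ⟨_, hq, _⟩
          · exact he
          · exact absurd rfl hq
        have : esgn a b A L = 1 := by
          rw [hs]
          rcases s1pm with h' | h'
          · rw [h', one_pow]
          · rw [h', heL.neg_one_pow]
        rw [this] at hsgn
        norm_num at hsgn
      · exact h
    -- value of the updated entry
    have h2cyc : A₁ (b ℓ₁) ℓ₁ = 2 * A (b ℓ₁) ℓ₁ := by
      rw [hA₁eq, hcdef]
      have hq1 := pm1.sq (hA2p ℓ₁)
      have h' := hs12
      rw [ha1, ha2, hb2] at h'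
      linear_combination (-(A (b ℓ₁) ℓ₁)) * h' + (A v ℓ₁ * A v ℓ₂ * A (b ℓ₁) ℓ₂) * hq1
    -- second expansion along the column ℓ₁ (single entry at row b ℓ₁)
    set xh : {x : V // x ≠ v} := ⟨b ℓ₁, hbv ℓ₁⟩ with hxhdef
    set eh : {ℓ : E // ℓ ≠ ℓ₂} := ⟨ℓ₁, h12⟩ with hehdef
    have hcol : ∀ y : {x : V // x ≠ v}, y ≠ xh → A'ᵀ eh y = 0 := by
      intro y hy
      have hyx : y.1 ≠ b ℓ₁ := fun hc => hy (Subtype.ext hc)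
      have h1 : A y.1 ℓ₁ = 0 := hA0 ℓ₁ y.1 (fun hc => y.2 (by rw [hc, ha1])) hyx
      have h2 : A y.1 ℓ₂ = 0 :=
        hA0 ℓ₂ y.1 (fun hc => y.2 (by rw [hc, ha2])) (fun hc => hyx (by rw [hc, hb2]))
      show A₁ y.1 ℓ₁ = 0
      rw [hA₁eq, h1, h2]
      ring
    have hkV'' : Fintype.card {y : {x : V // x ≠ v} // y ≠ xh} = k - 1 - 1 := by
      have h1 : Fintype.card {y : {x : V // x ≠ v} // y ≠ xh}
          = Fintype.card {y : {x : V // x ≠ v} // ¬ y = xh} := Fintype.card_congr (Equiv.refl _)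
      rw [h1, Fintype.card_subtype_compl, Fintype.card_subtype_eq, hkV']
    have hkE'' : Fintype.card {e : {ℓ : E // ℓ ≠ ℓ₂} // e ≠ eh} = k - 1 - 1 := by
      have h1 : Fintype.card {e : {ℓ : E // ℓ ≠ ℓ₂} // e ≠ eh}
          = Fintype.card {e : {ℓ : E // ℓ ≠ ℓ₂} // ¬ e = eh} := Fintype.card_congr (Equiv.refl _)
      rw [h1, Fintype.card_subtype_compl, Fintype.card_subtype_eq, hkE']
    have g₂ : {e : {ℓ : E // ℓ ≠ ℓ₂} // e ≠ eh} ≃ {y : {x : V // x ≠ v} // y ≠ xh} :=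
      Fintype.equivOfCardEq (by rw [hkV'', hkE''])
    have f'' : {y : {x : V // x ≠ v} // y ≠ xh} ≃ {e : {ℓ : E // ℓ ≠ ℓ₂} // e ≠ eh} :=
      Fintype.equivOfCardEq (by rw [hkV'', hkE''])
    have hdm2 := det_minor A'ᵀ f'.symm eh xh hcol g₂
    have bridge1 : PM ((A'.submatrix id ⇑f').det) ((A'ᵀ.submatrix id ⇑f'.symm).det) :=
      (det_transpose_sub_pm A' f'.symm f').symm
    -- the doubly-restricted matrix
    set A'' : Matrix {y : {x : V // x ≠ v} // y ≠ xh} {e : {ℓ : E // ℓ ≠ ℓ₂} // e ≠ eh} ℝ :=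
      A'.submatrix Subtype.val Subtype.val with hA''def
    have hbr : (A'ᵀ.submatrix (Subtype.val : {e : {ℓ : E // ℓ ≠ ℓ₂} // e ≠ eh} → _)
        (Subtype.val : {y : {x : V // x ≠ v} // y ≠ xh} → _)) = A''ᵀ := by
      ext e y; rfl
    -- edge data of the doubly-restricted graph
    have hnot1 : ∀ e : {e : {ℓ : E // ℓ ≠ ℓ₂} // e ≠ eh}, e.1.1 ≠ ℓ₁ :=
      fun e hc => e.2 (Subtype.ext hc)
    have hnot2 : ∀ e : {e : {ℓ : E // ℓ ≠ ℓ₂} // e ≠ eh}, e.1.1 ≠ ℓ₂ := fun e => e.1.2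
    have hav : ∀ e : {e : {ℓ : E // ℓ ≠ ℓ₂} // e ≠ eh}, a e.1.1 ≠ v :=
      fun e hc => (hv e.1.1 (Or.inl hc)).elim (hnot1 e) (hnot2 e)
    have hax : ∀ e : {e : {ℓ : E // ℓ ≠ ℓ₂} // e ≠ eh}, a e.1.1 ≠ b ℓ₁ :=
      fun e hc => (hvx e.1.1 (Or.inl hc)).elim (hnot1 e) (hnot2 e)
    have hbx : ∀ e : {e : {ℓ : E // ℓ ≠ ℓ₂} // e ≠ eh}, b e.1.1 ≠ b ℓ₁ :=
      fun e hc => (hvx e.1.1 (Or.inr hc)).elim (hnot1 e) (hnot2 e)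
    set a'' : {e : {ℓ : E // ℓ ≠ ℓ₂} // e ≠ eh} → {y : {x : V // x ≠ v} // y ≠ xh} :=
      fun e => ⟨⟨a e.1.1, hav e⟩, fun hc => hax e (congrArg Subtype.val hc)⟩ with ha''def
    set b'' : {e : {ℓ : E // ℓ ≠ ℓ₂} // e ≠ eh} → {y : {x : V // x ≠ v} // y ≠ xh} :=
      fun e => ⟨⟨b e.1.1, hbv e.1.1⟩, fun hc => hbx e (congrArg Subtype.val hc)⟩ with hb''def
    have hA''entry : ∀ (y : {y : {x : V // x ≠ v} // y ≠ xh})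
        (e : {e : {ℓ : E // ℓ ≠ ℓ₂} // e ≠ eh}), A'' y e = A y.1.1 e.1.1 := by
      intro y e
      show A₁ y.1.1 e.1.1 = A y.1.1 e.1.1
      exact hA₁ne _ _ (hnot1 e)
    have hab'' : ∀ e, a'' e ≠ b'' e := by
      intro e hc
      exact hab e.1.1 (congrArg (fun z => z.1.1) hc)
    have hA1'' : ∀ e, A'' (a'' e) e = 1 ∨ A'' (a'' e) e = -1 := by
      intro e; rw [hA''entry]; exact hA1 e.1.1
    have hA2'' : ∀ e, A'' (b'' e) e = 1 ∨ A'' (b'' e) e = -1 := by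
      intro e; rw [hA''entry]; exact hA2 e.1.1
    have hA0'' : ∀ e y, y ≠ a'' e → y ≠ b'' e → A'' y e = 0 := by
      intro e y hya hyb
      rw [hA''entry]
      refine hA0 e.1.1 y.1.1 (fun hc => hya ?_) (fun hc => hyb ?_)
      · exact Subtype.ext (Subtype.ext hc)
      · exact Subtype.ext (Subtype.ext hc)
    -- walks avoiding the 2-cycle component restrict
    have surgery3 : ∀ (L : List E) (p q : V), IsWalk a b p q L → ∀ (hp1 : p ≠ v) (hp2 : p ≠ b ℓ₁),
        ∃ (hq1 : q ≠ v) (hq2 : q ≠ b ℓ₁) (L'' : List {e : {ℓ : E // ℓ ≠ ℓ₂} // e ≠ eh}),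
          IsWalk a'' b'' ⟨⟨p, hp1⟩, fun hc => hp2 (congrArg Subtype.val hc)⟩
            ⟨⟨q, hq1⟩, fun hc => hq2 (congrArg Subtype.val hc)⟩ L''
          ∧ esgn a'' b'' A'' L'' = esgn a b A L := by
      intro L p q hL
      induction hL with
      | nil v' =>
        intro hp1 hp2
        exact ⟨hp1, hp2, [], IsWalk.nil _, by rw [esgn_nil, esgn_nil]⟩
      | consA ℓ h ihh =>
        intro hp1 hp2
        have hne1 : ℓ ≠ ℓ₁ := fun hc => hp1 (by rw [hc, ha1])
        have hne2 : ℓ ≠ ℓ₂ := fun hc => hp1 (by rw [hc, ha2])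
        have hb1 : b ℓ ≠ v := hbv ℓ
        have hb2' : b ℓ ≠ b ℓ₁ := fun hc => (hvx ℓ (Or.inr hc)).elim hne1 hne2
        obtain ⟨hq1, hq2, L'', hL'', hs⟩ := ihh hb1 hb2'
        set e : {e : {ℓ : E // ℓ ≠ ℓ₂} // e ≠ eh} :=
          ⟨⟨ℓ, hne2⟩, fun hc => hne1 (congrArg Subtype.val hc)⟩ with hedef
        refine ⟨hq1, hq2, e :: L'', ?_, ?_⟩
        · exact IsWalk.consA e hL''
        · rw [esgn_cons, hs, hA''entry, hA''entry]
          rfl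
      | consB ℓ h ihh =>
        intro hp1 hp2
        have hne1 : ℓ ≠ ℓ₁ := fun hc => hp2 (by rw [hc])
        have hne2 : ℓ ≠ ℓ₂ := fun hc => hp2 (by rw [hc, hb2])
        have ha1' : a ℓ ≠ v := fun hc => (hv ℓ (Or.inl hc)).elim hne1 hne2
        have ha2' : a ℓ ≠ b ℓ₁ := fun hc => (hvx ℓ (Or.inl hc)).elim hne1 hne2
        obtain ⟨hq1, hq2, L'', hL'', hs⟩ := ihh ha1' ha2'
        set e : {e : {ℓ : E // ℓ ≠ ℓ₂} // e ≠ eh} :=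
          ⟨⟨ℓ, hne2⟩, fun hc => hne1 (congrArg Subtype.val hc)⟩ with hedef
        refine ⟨hq1, hq2, e :: L'', ?_, ?_⟩
        · exact IsWalk.consB e hL''
        · rw [esgn_cons, hs, hA''entry, hA''entry]
          rfl
    have hneg'' : ∀ y, ∃ L, IsWalk a'' b'' y y L ∧ esgn a'' b'' A'' L = -1 := by
      intro y
      obtain ⟨L, hL, hsgn⟩ := hneg y.1.1
      obtain ⟨hq1, hq2, L'', hL'', hs⟩ := surgery3 L y.1.1 y.1.1 hL y.1.2
        (fun hc => y.2 (Subtype.ext hc))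
      exact ⟨L'', by simpa using hL'', by rw [hs, hsgn]⟩
    have hIH2 := IH (k - 1 - 1) (by omega) _ _ a'' b'' A'' hkV'' hab'' hA1'' hA2'' hA0''
      hneg'' f''
    -- component count
    have hcc : Nat.card (Quot (Rel a b))
        = Nat.card (Quot (Rel a'' b'')) + 1 := by
      refine card_quot_plus_one (fun y => y.1.1) (Rel a'' b'') (Rel a b) (Rel.equiv a b) v
        ?_ ?_ ?_ ?_
      · intro x y hxy
        obtain ⟨L, hL⟩ := hxy
        induction hL with
        | nil => exact Rel.refl a b _
        | consA e h ihh => exact Rel.trans' ⟨[e.1.1], IsWalk.single_ab a b e.1.1⟩ ihh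
        | consB e h ihh => exact Rel.trans' ⟨[e.1.1], IsWalk.single_ba a b e.1.1⟩ ihh
      · intro x y hxy
        obtain ⟨L, hL⟩ := hxy
        obtain ⟨hq1, hq2, L'', hL'', _⟩ := surgery3 L x.1.1 y.1.1 hL x.1.2
          (fun hc => x.2 (Subtype.ext hc))
        exact ⟨L'', by simpa using hL''⟩
      · intro y hy
        obtain ⟨L, hL⟩ := hy
        obtain ⟨hq1, _, _⟩ := surgery3 L y.1.1 v hL y.1.2 (fun hc => y.2 (Subtype.ext hc))
        exact hq1 rfl
      · intro z
        by_cases hz1 : z = v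
        · subst hz1; exact Or.inl (Rel.refl a b z)
        · by_cases hz2 : z = b ℓ₁
          · refine Or.inl ⟨[ℓ₁], ?_⟩
            subst hz2
            have := IsWalk.single_ab a b ℓ₁
            rwa [ha1] at this
          · exact Or.inr ⟨⟨⟨z, hz1⟩, fun hc => hz2 (congrArg Subtype.val hc)⟩, Rel.refl a b z⟩
    -- assemble the determinant chain
    have heq1 : A'ᵀ eh xh = A₁ (b ℓ₁) ℓ₁ := rfl
    have chain2 : PM ((A'.submatrix id ⇑f').det)
        (A₁ (b ℓ₁) ℓ₁ * ((A''ᵀ.submatrix id ⇑g₂).det)) := by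
      refine bridge1.trans (hdm2.trans ?_)
      rw [heq1, hbr]
      exact PM.rfl
    have chain3 : PM ((A''ᵀ.submatrix id ⇑g₂).det) (2 ^ Nat.card (Quot (Rel a'' b''))) :=
      (det_transpose_sub_pm A'' g₂ f'').trans hIH2
    have hfin : PM ((A.submatrix id ⇑f).det)
        (A₁ v ℓ₂ * (A₁ (b ℓ₁) ℓ₁ * (2 ^ Nat.card (Quot (Rel a'' b''))))) :=
      hdm.trans (PM.cmul _ (chain2.trans (PM.cmul _ chain3)))
    rw [hcc]
    refine hfin.trans ?_
    refine pm1_mul_PM hA₁vpm ?_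
    have hre : A₁ (b ℓ₁) ℓ₁ * (2 ^ Nat.card (Quot (Rel a'' b'')))
        = A (b ℓ₁) ℓ₁ * (2 ^ (Nat.card (Quot (Rel a'' b'')) + 1)) := by
      rw [h2cyc, pow_succ]
      ring
    rw [hre]
    exact pm1_mul_PM (hA2p ℓ₁) PM.rfl
  · -- contraction case
    have hu_v : b ℓ₁ ≠ v := hbv ℓ₁
    have hw_v : b ℓ₂ ≠ v := hbv ℓ₂
    have h_uℓ₂ : A (b ℓ₁) ℓ₂ = 0 :=
      hA0 ℓ₂ (b ℓ₁) (fun hc => hu_v (by rw [hc, ha2])) (fun hc => huw hc)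
    have h_wℓ₁ : A (b ℓ₂) ℓ₁ = 0 :=
      hA0 ℓ₁ (b ℓ₂) (fun hc => hw_v (by rw [hc, ha1])) (fun hc => huw hc.symm)
    set a' : {ℓ : E // ℓ ≠ ℓ₂} → {x : V // x ≠ v} :=
      fun ℓ => if h : ℓ.1 = ℓ₁ then ⟨b ℓ₁, hu_v⟩ else
        ⟨a ℓ.1, fun hc => ((hv ℓ.1 (Or.inl hc)).elim h ℓ.2)⟩ with ha'def
    set b' : {ℓ : E // ℓ ≠ ℓ₂} → {x : V // x ≠ v} :=
      fun ℓ => if h : ℓ.1 = ℓ₁ then ⟨b ℓ₂, hw_v⟩ else ⟨b ℓ.1, hbv ℓ.1⟩ with hb'def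
    have ha'ne : ∀ (ℓ : {ℓ : E // ℓ ≠ ℓ₂}) (h : ℓ.1 ≠ ℓ₁),
        a' ℓ = ⟨a ℓ.1, fun hc => ((hv ℓ.1 (Or.inl hc)).elim h ℓ.2)⟩ := by
      intro ℓ h; simp [ha'def, h]
    have hb'ne : ∀ (ℓ : {ℓ : E // ℓ ≠ ℓ₂}) (h : ℓ.1 ≠ ℓ₁), b' ℓ = ⟨b ℓ.1, hbv ℓ.1⟩ := by
      intro ℓ h; simp [hb'def, h]
    have hE1 : (⟨ℓ₁, h12⟩ : {ℓ : E // ℓ ≠ ℓ₂}).1 = ℓ₁ := rfl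
    have ha'e1 : a' ⟨ℓ₁, h12⟩ = ⟨b ℓ₁, hu_v⟩ := by simp [ha'def]
    have hb'e1 : b' ⟨ℓ₁, h12⟩ = ⟨b ℓ₂, hw_v⟩ := by simp [hb'def]
    -- matrix entries of the contracted edge
    have hAu : A₁ (b ℓ₁) ℓ₁ = A (b ℓ₁) ℓ₁ := by rw [hA₁eq]; rw [h_uℓ₂]; ring
    have hAw : A₁ (b ℓ₂) ℓ₁ = -(c * A (b ℓ₂) ℓ₂) := by rw [hA₁eq]; rw [h_wℓ₁]; ring
    have hA1' : ∀ ℓ, A' (a' ℓ) ℓ = 1 ∨ A' (a' ℓ) ℓ = -1 := by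
      intro ℓ
      by_cases h : ℓ.1 = ℓ₁
      · have : A' (a' ℓ) ℓ = A₁ (b ℓ₁) ℓ.1 := by rw [ha'def]; simp [h, hA'def]
        rw [this, h, hAu]
        exact hA2 ℓ₁
      · have : A' (a' ℓ) ℓ = A₁ (a ℓ.1) ℓ.1 := by rw [ha'ne ℓ h]; simp [hA'def]
        rw [this, hA₁ne _ _ h]
        exact hA1 ℓ.1
    have hA2' : ∀ ℓ, A' (b' ℓ) ℓ = 1 ∨ A' (b' ℓ) ℓ = -1 := by
      intro ℓ
      by_cases h : ℓ.1 = ℓ₁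
      · have : A' (b' ℓ) ℓ = A₁ (b ℓ₂) ℓ.1 := by rw [hb'def]; simp [h, hA'def]
        rw [this, h, hAw]
        rcases (hcpm.mul (hA2p ℓ₂)).neg with h' | h' <;> [left; right] <;> linarith [h']
      · have : A' (b' ℓ) ℓ = A₁ (b ℓ.1) ℓ.1 := by rw [hb'ne ℓ h]; simp [hA'def]
        rw [this, hA₁ne _ _ h]
        exact hA2 ℓ.1
    have hab' : ∀ ℓ, a' ℓ ≠ b' ℓ := by
      intro ℓ hc
      by_cases h : ℓ.1 = ℓ₁
      · rw [ha'def, hb'def] at hc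
        simp only [h, dif_pos] at hc
        exact huw (congrArg Subtype.val hc)
      · rw [ha'ne ℓ h, hb'ne ℓ h] at hc
        exact hab ℓ.1 (congrArg Subtype.val hc)
    have hA0' : ∀ ℓ x, x ≠ a' ℓ → x ≠ b' ℓ → A' x ℓ = 0 := by
      intro ℓ x hxa hxb
      by_cases h : ℓ.1 = ℓ₁
      · have hxu : x.1 ≠ b ℓ₁ := fun hc => hxa (by rw [ha'def]; simp [h]; exact Subtype.ext hc)
        have hxw : x.1 ≠ b ℓ₂ := fun hc => hxb (by rw [hb'def]; simp [h]; exact Subtype.ext hc)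
        have h1 : A x.1 ℓ₁ = 0 := hA0 ℓ₁ x.1 (fun hc => x.2 (by rw [hc, ha1])) hxu
        have h2 : A x.1 ℓ₂ = 0 := hA0 ℓ₂ x.1 (fun hc => x.2 (by rw [hc, ha2])) hxw
        have : A' x ℓ = A₁ x.1 ℓ.1 := rfl
        rw [this, h, hA₁eq, h1, h2]
        ring
      · have : A' x ℓ = A₁ x.1 ℓ.1 := rfl
        rw [this, hA₁ne _ _ h]
        refine hA0 ℓ.1 x.1 (fun hc => hxa ?_) (fun hc => hxb ?_)
        · rw [ha'ne ℓ h]; exact Subtype.ext hc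
        · rw [hb'ne ℓ h]; exact Subtype.ext hc
    -- the surgery: transform walks avoiding v into walks of the contracted graph
    have hfac : -(A' (a' ⟨ℓ₁, h12⟩) ⟨ℓ₁, h12⟩ * A' (b' ⟨ℓ₁, h12⟩) ⟨ℓ₁, h12⟩)
        = -(A (a ℓ₁) ℓ₁ * A (b ℓ₁) ℓ₁) * -(A (a ℓ₂) ℓ₂ * A (b ℓ₂) ℓ₂) := by
      have e1 : A' (a' ⟨ℓ₁, h12⟩) ⟨ℓ₁, h12⟩ = A₁ (b ℓ₁) ℓ₁ := by rw [ha'e1]; rfl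
      have e2 : A' (b' ⟨ℓ₁, h12⟩) ⟨ℓ₁, h12⟩ = A₁ (b ℓ₂) ℓ₁ := by rw [hb'e1]; rfl
      rw [e1, e2, hAu, hAw, ha1, ha2, hcdef]
      ring
    have surgery2 : ∀ (m : ℕ) (L : List E), L.length ≤ m →
        ∀ (x y : V) (hx : x ≠ v) (hy : y ≠ v), IsWalk a b x y L →
        ∃ L', IsWalk a' b' ⟨x, hx⟩ ⟨y, hy⟩ L' ∧ esgn a' b' A' L' = esgn a b A L := by
      intro m
      induction m with
      | zero =>
        intro L hlen x y hx hy hw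
        have : L = [] := List.length_eq_zero_iff.mp (Nat.le_zero.mp hlen)
        subst this
        have hxy := isWalk_nil_eq hw
        subst hxy
        exact ⟨[], IsWalk.nil _, by rw [esgn_nil, esgn_nil]⟩
      | succ m ih =>
        intro L hlen x y hx hy hw
        match L with
        | [] =>
          have hxy := isWalk_nil_eq hw
          subst hxy
          exact ⟨[], IsWalk.nil _, by rw [esgn_nil, esgn_nil]⟩
        | ℓ :: L₁ =>
          rcases isWalk_cons_cases hw with ⟨hxa, hw₁⟩ | ⟨hxb, hw₁⟩
          · -- forward step; cannot be ℓ₁ or ℓ₂ since x ≠ v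
            have hℓ1 : ℓ ≠ ℓ₁ := fun hc => hx (by rw [hxa, hc, ha1])
            have hℓ2 : ℓ ≠ ℓ₂ := fun hc => hx (by rw [hxa, hc, ha2])
            have hlen₁ : L₁.length ≤ m := by simp at hlen; omega
            obtain ⟨L', hL', hs⟩ := ih L₁ hlen₁ (b ℓ) y (hbv ℓ) hy hw₁
            refine ⟨⟨ℓ, hℓ2⟩ :: L', ?_, ?_⟩
            · have h1 : (⟨x, hx⟩ : {x : V // x ≠ v}) = a' ⟨ℓ, hℓ2⟩ := by
                rw [ha'ne ⟨ℓ, hℓ2⟩ hℓ1]; exact Subtype.ext hxa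
              rw [h1]
              have h2 : (⟨b ℓ, hbv ℓ⟩ : {x : V // x ≠ v}) = b' ⟨ℓ, hℓ2⟩ := by
                rw [hb'ne ⟨ℓ, hℓ2⟩ hℓ1]
              rw [h2] at hL'
              exact IsWalk.consA _ hL'
            · rw [esgn_cons, esgn_cons, hs, ha'ne ⟨ℓ, hℓ2⟩ hℓ1, hb'ne ⟨ℓ, hℓ2⟩ hℓ1]
              have : A' ⟨a ℓ, fun hc => ((hv ℓ (Or.inl hc)).elim hℓ1 hℓ2)⟩ ⟨ℓ, hℓ2⟩
                  = A (a ℓ) ℓ := by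
                show A₁ (a ℓ) ℓ = A (a ℓ) ℓ
                exact hA₁ne _ _ hℓ1
              rw [this]
              have : A' ⟨b ℓ, hbv ℓ⟩ ⟨ℓ, hℓ2⟩ = A (b ℓ) ℓ := by
                show A₁ (b ℓ) ℓ = A (b ℓ) ℓ
                exact hA₁ne _ _ hℓ1
              rw [this]
          · -- backward step: x = b ℓ, next vertex a ℓ
            by_cases haℓ : a ℓ = v
            · -- we step into v, so we must step out again
              have hℓ12 : ℓ = ℓ₁ ∨ ℓ = ℓ₂ := hv ℓ (Or.inl haℓ)
              rw [haℓ] at hw₁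
              match L₁ with
              | [] => exact absurd (isWalk_nil_eq hw₁).symm hy
              | ℓ' :: L₂ =>
                rcases isWalk_cons_cases hw₁ with ⟨h1, hw₂⟩ | ⟨h1, hw₂⟩
                · have hℓ'12 : ℓ' = ℓ₁ ∨ ℓ' = ℓ₂ := hv ℓ' (Or.inl h1.symm)
                  have hlen₂ : L₂.length ≤ m := by simp at hlen; omega
                  have hsq1 := pm1.sq (((hA1p ℓ₁).mul (hA2p ℓ₁)).neg)
                  have hsq2 := pm1.sq (((hA1p ℓ₂).mul (hA2p ℓ₂)).neg)
                  rcases hℓ12 with hℓe | hℓe <;> rcases hℓ'12 with hℓe' | hℓe' <;>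
                    rw [hℓe] at hxb ⊢ <;> rw [hℓe'] at hw₂ ⊢
                  · -- ℓ₁ then ℓ₁ : cancel
                    obtain ⟨L', hL', hs⟩ := ih L₂ hlen₂ x y hx hy (by rwa [← hxb] at hw₂)
                    refine ⟨L', hL', ?_⟩
                    rw [hs, esgn_cons, esgn_cons, ← mul_assoc, hsq1, one_mul]
                  · -- ℓ₁ then ℓ₂ : contracted edge, forward
                    obtain ⟨L', hL', hs⟩ := ih L₂ hlen₂ (b ℓ₂) y (hbv ℓ₂) hy hw₂
                    refine ⟨⟨ℓ₁, h12⟩ :: L', ?_, ?_⟩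
                    · have hh1 : (⟨x, hx⟩ : {x : V // x ≠ v}) = a' ⟨ℓ₁, h12⟩ := by
                        rw [ha'e1]; exact Subtype.ext hxb
                      rw [hh1]
                      have hh2 : (⟨b ℓ₂, hbv ℓ₂⟩ : {x : V // x ≠ v}) = b' ⟨ℓ₁, h12⟩ := by
                        rw [hb'e1]
                      rw [hh2] at hL'
                      exact IsWalk.consA _ hL'
                    · rw [esgn_cons, esgn_cons, esgn_cons, hs, hfac]
                      ring
                  · -- ℓ₂ then ℓ₁ : contracted edge, backward
                    obtain ⟨L', hL', hs⟩ := ih L₂ hlen₂ (b ℓ₁) y (hbv ℓ₁) hy hw₂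
                    refine ⟨⟨ℓ₁, h12⟩ :: L', ?_, ?_⟩
                    · have hh1 : (⟨x, hx⟩ : {x : V // x ≠ v}) = b' ⟨ℓ₁, h12⟩ := by
                        rw [hb'e1]; exact Subtype.ext hxb
                      rw [hh1]
                      have hh2 : (⟨b ℓ₁, hbv ℓ₁⟩ : {x : V // x ≠ v}) = a' ⟨ℓ₁, h12⟩ := by
                        rw [ha'e1]
                      rw [hh2] at hL'
                      exact IsWalk.consB _ hL'
                    · rw [esgn_cons, esgn_cons, esgn_cons, hs, hfac]
                      ring
                  · -- ℓ₂ then ℓ₂ : cancel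
                    obtain ⟨L', hL', hs⟩ := ih L₂ hlen₂ x y hx hy (by rwa [← hxb] at hw₂)
                    refine ⟨L', hL', ?_⟩
                    rw [hs, esgn_cons, esgn_cons, ← mul_assoc, hsq2, one_mul]
                · exact absurd h1.symm (hbv ℓ')
            · have hℓ1 : ℓ ≠ ℓ₁ := fun hc => haℓ (by rw [hc, ha1])
              have hℓ2 : ℓ ≠ ℓ₂ := fun hc => haℓ (by rw [hc, ha2])
              have hlen₁ : L₁.length ≤ m := by simp at hlen; omega
              obtain ⟨L', hL', hs⟩ := ih L₁ hlen₁ (a ℓ) y haℓ hy hw₁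
              refine ⟨⟨ℓ, hℓ2⟩ :: L', ?_, ?_⟩
              · have h1 : (⟨x, hx⟩ : {x : V // x ≠ v}) = b' ⟨ℓ, hℓ2⟩ := by
                  rw [hb'ne ⟨ℓ, hℓ2⟩ hℓ1]; exact Subtype.ext hxb
                rw [h1]
                have h2 : (⟨a ℓ, haℓ⟩ : {x : V // x ≠ v}) = a' ⟨ℓ, hℓ2⟩ := by
                  rw [ha'ne ⟨ℓ, hℓ2⟩ hℓ1]
                rw [h2] at hL'
                exact IsWalk.consB _ hL'
              · rw [esgn_cons, esgn_cons, hs]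
                have e1 : A' (a' ⟨ℓ, hℓ2⟩) ⟨ℓ, hℓ2⟩ = A (a ℓ) ℓ := by
                  rw [ha'ne ⟨ℓ, hℓ2⟩ hℓ1]
                  show A₁ (a ℓ) ℓ = A (a ℓ) ℓ
                  exact hA₁ne _ _ hℓ1
                have e2 : A' (b' ⟨ℓ, hℓ2⟩) ⟨ℓ, hℓ2⟩ = A (b ℓ) ℓ := by
                  rw [hb'ne ⟨ℓ, hℓ2⟩ hℓ1]
                  show A₁ (b ℓ) ℓ = A (b ℓ) ℓ
                  exact hA₁ne _ _ hℓ1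
                rw [e1, e2]
    have hneg' : ∀ x, ∃ L, IsWalk a' b' x x L ∧ esgn a' b' A' L = -1 := by
      intro x
      obtain ⟨L, hL, hs⟩ := hneg x.1
      obtain ⟨L', hL', hs'⟩ := surgery2 L.length L le_rfl x.1 x.1 x.2 x.2 hL
      exact ⟨L', by simpa using hL', by rw [hs', hs]⟩
    have hIH := IH (k - 1) (by omega) _ _ a' b' A' hkV' hab' hA1' hA2' hA0' hneg' f'
    -- component count is unchanged
    have hcc : Nat.card (Quot (Rel a' b')) = Nat.card (Quot (Rel a b)) := by
      refine card_quot_congr Subtype.val (Rel a' b') (Rel a b) (Rel.equiv a b) ?_ ?_ ?_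
      · intro x y hxy
        obtain ⟨L, hL⟩ := hxy
        induction hL with
        | nil => exact Rel.refl a b _
        | consA ℓ h ihh =>
          refine Rel.trans' ?_ ihh
          by_cases hℓ : ℓ.1 = ℓ₁
          · rw [ha'def, hb'def]
            simp only [hℓ, dif_pos]
            refine ⟨[ℓ₁, ℓ₂], ?_⟩
            refine IsWalk.consB ℓ₁ ?_
            rw [ha1, ← ha2]
            exact IsWalk.single_ab a b ℓ₂
          · rw [ha'ne ℓ hℓ, hb'ne ℓ hℓ]
            exact ⟨[ℓ.1], IsWalk.single_ab a b ℓ.1⟩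
        | consB ℓ h ihh =>
          refine Rel.trans' ?_ ihh
          by_cases hℓ : ℓ.1 = ℓ₁
          · rw [ha'def, hb'def]
            simp only [hℓ, dif_pos]
            refine Rel.symm' ⟨[ℓ₁, ℓ₂], ?_⟩
            refine IsWalk.consB ℓ₁ ?_
            rw [ha1, ← ha2]
            exact IsWalk.single_ab a b ℓ₂
          · rw [ha'ne ℓ hℓ, hb'ne ℓ hℓ]
            exact ⟨[ℓ.1], IsWalk.single_ba a b ℓ.1⟩
      · intro x y hxy
        obtain ⟨L, hL⟩ := hxy
        obtain ⟨L', hL', _⟩ := surgery2 L.length L le_rfl x.1 y.1 x.2 y.2 hL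
        exact ⟨L', by simpa using hL'⟩
      · intro z
        by_cases hz : z = v
        · subst hz
          refine ⟨⟨b ℓ₁, hu_v⟩, ⟨[ℓ₁], ?_⟩⟩
          have := IsWalk.single_ba a b ℓ₁
          rwa [ha1] at this
        · exact ⟨⟨z, hz⟩, Rel.refl a b z⟩
    rw [← hcc]
    exact hdm.trans (pm1_mul_PM hA₁vpm hIH)

end CaseDeg2


theorem key : ∀ k : ℕ, KeyStmt k := by
  intro k
  induction k using Nat.strong_induction_on with
  | _ k IH =>
  intro V E instV instdV instE instdE a b A hk hab hA1 hA2 hA0 hneg f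
  by_cases hVempty : IsEmpty V
  · rw [Matrix.det_isEmpty]
    haveI : IsEmpty (Quot (Rel a b)) := ⟨fun q => by
      induction q using Quot.ind with | _ x => exact (hVempty.false x).elim⟩
    rw [Nat.card_of_isEmpty]
    exact Or.inl (by norm_num)
  · have hnempty : Nonempty V := not_isEmpty_iff.mp hVempty
    have hk1 : 0 < k := by
      rw [← hk]
      exact Fintype.card_pos_iff.mpr hnempty
    have hdeg1 : ∀ x : V, 1 ≤ (degF a b x).card := by
      intro x
      obtain ⟨L, hL, hs⟩ := hneg x
      cases L with
      | nil =>
        rw [esgn_nil] at hs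
        norm_num at hs
      | cons ℓ L₁ =>
        rcases isWalk_cons_cases hL with ⟨h1, _⟩ | ⟨h1, _⟩
        · exact Finset.card_pos.mpr
            ⟨ℓ, Finset.mem_filter.mpr ⟨Finset.mem_univ _, Or.inl h1.symm⟩⟩
        · exact Finset.card_pos.mpr
            ⟨ℓ, Finset.mem_filter.mpr ⟨Finset.mem_univ _, Or.inr h1.symm⟩⟩
    -- pick the distinguished vertex
    by_cases hleaf : ∃ x, (degF a b x).card = 1
    case pos =>
      obtain ⟨v, hv1⟩ := hleaf
      set s : E → Prop := fun ℓ => b ℓ = v with hsdef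
      haveI : DecidablePred s := fun ℓ => by
        rw [hsdef]
        infer_instance
      have haSp : ∀ ℓ, s ℓ → aS a b s ℓ = b ℓ := fun ℓ h => if_pos h
      have haSn : ∀ ℓ, ¬ s ℓ → aS a b s ℓ = a ℓ := fun ℓ h => if_neg h
      have hbSp : ∀ ℓ, s ℓ → bS a b s ℓ = a ℓ := fun ℓ h => if_pos h
      have hbSn : ∀ ℓ, ¬ s ℓ → bS a b s ℓ = b ℓ := fun ℓ h => if_neg h
      have hbv : ∀ ℓ, bS a b s ℓ ≠ v := by
        intro ℓ
        by_cases hsl : s ℓ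
        · rw [hbSp ℓ hsl]
          exact fun hc => hab ℓ (hc.trans hsl.symm)
        · rw [hbSn ℓ hsl]
          exact hsl
      have hab' : ∀ ℓ, aS a b s ℓ ≠ bS a b s ℓ := by
        intro ℓ
        by_cases hsl : s ℓ
        · rw [haSp ℓ hsl, hbSp ℓ hsl]; exact (hab ℓ).symm
        · rw [haSn ℓ hsl, hbSn ℓ hsl]; exact hab ℓ
      have hA1' : ∀ ℓ, A (aS a b s ℓ) ℓ = 1 ∨ A (aS a b s ℓ) ℓ = -1 := by
        intro ℓ
        by_cases hsl : s ℓ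
        · rw [haSp ℓ hsl]; exact hA2 ℓ
        · rw [haSn ℓ hsl]; exact hA1 ℓ
      have hA2' : ∀ ℓ, A (bS a b s ℓ) ℓ = 1 ∨ A (bS a b s ℓ) ℓ = -1 := by
        intro ℓ
        by_cases hsl : s ℓ
        · rw [hbSp ℓ hsl]; exact hA1 ℓ
        · rw [hbSn ℓ hsl]; exact hA2 ℓ
      have hA0' : ∀ ℓ x, x ≠ aS a b s ℓ → x ≠ bS a b s ℓ → A x ℓ = 0 := by
        intro ℓ x h1 h2
        by_cases hsl : s ℓ
        · rw [haSp ℓ hsl] at h1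
          rw [hbSp ℓ hsl] at h2
          exact hA0 ℓ x h2 h1
        · rw [haSn ℓ hsl] at h1
          rw [hbSn ℓ hsl] at h2
          exact hA0 ℓ x h1 h2
      have hneg' : ∀ x, ∃ L, IsWalk (aS a b s) (bS a b s) x x L ∧
          esgn (aS a b s) (bS a b s) A L = -1 := by
        intro x
        obtain ⟨L, hL, hs'⟩ := hneg x
        exact ⟨L, isWalk_swap a b s hL, by rw [esgn_swap]; exact hs'⟩
      have hdv1 : (degF (aS a b s) (bS a b s) v).card = 1 := by
        rw [degF_swap]
        exact hv1
      obtain ⟨ℓ₀, hℓ₀⟩ := Finset.card_eq_one.mp hdv1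
      have hvu : ∀ ℓ, aS a b s ℓ = v ∨ bS a b s ℓ = v → ℓ = ℓ₀ := by
        intro ℓ h
        have : ℓ ∈ degF (aS a b s) (bS a b s) v :=
          Finset.mem_filter.mpr ⟨Finset.mem_univ _, h⟩
        rw [hℓ₀] at this
        simpa using this
      have hva : aS a b s ℓ₀ = v := by
        have : ℓ₀ ∈ degF (aS a b s) (bS a b s) v := by rw [hℓ₀]; simp
        exact ((Finset.mem_filter.mp this).2).resolve_right (hbv ℓ₀)
      have hqc : Nat.card (Quot (Rel a b))
          = Nat.card (Quot (Rel (aS a b s) (bS a b s))) :=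
        Nat.card_congr (Quot.congrRight (fun x y =>
          ⟨fun h => h.elim fun L hL => ⟨L, isWalk_swap a b s hL⟩,
           fun h => h.elim fun L hL => ⟨L, isWalk_swap_rev a b s hL⟩⟩))
      rw [hqc]
      exact case_leaf hk hab' hA1' hA2' hA0' hneg' hvu hva hbv (IH (k - 1) (by omega)) f
    case neg =>
      have h2le : ∀ x, 2 ≤ (degF a b x).card := by
        intro x
        have h1 := hdeg1 x
        have h2 : (degF a b x).card ≠ 1 := fun hc => hleaf ⟨x, hc⟩
        omega
      have hcardE : Fintype.card E = k := by rw [← Fintype.card_congr f, hk]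
      have hdeg2 : ∀ x, (degF a b x).card = 2 := by
        by_contra hcon
        push_neg at hcon
        obtain ⟨x₀, hx₀⟩ := hcon
        have hlt : ∑ _x : V, 2 < ∑ x : V, (degF a b x).card := by
          refine Finset.sum_lt_sum (fun i _ => h2le i) ⟨x₀, Finset.mem_univ _, ?_⟩
          have := h2le x₀
          omega
        rw [sum_degF a b hab, hcardE] at hlt
        simp only [Finset.sum_const, Finset.card_univ, smul_eq_mul, mul_comm] at hlt
        rw [hk] at hlt
        omega
      obtain ⟨v⟩ := hnempty
      set s : E → Prop := fun ℓ => b ℓ = v with hsdef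
      haveI : DecidablePred s := fun ℓ => by
        rw [hsdef]
        infer_instance
      have haSp : ∀ ℓ, s ℓ → aS a b s ℓ = b ℓ := fun ℓ h => if_pos h
      have haSn : ∀ ℓ, ¬ s ℓ → aS a b s ℓ = a ℓ := fun ℓ h => if_neg h
      have hbSp : ∀ ℓ, s ℓ → bS a b s ℓ = a ℓ := fun ℓ h => if_pos h
      have hbSn : ∀ ℓ, ¬ s ℓ → bS a b s ℓ = b ℓ := fun ℓ h => if_neg h
      have hbv : ∀ ℓ, bS a b s ℓ ≠ v := by
        intro ℓ
        by_cases hsl : s ℓ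
        · rw [hbSp ℓ hsl]
          exact fun hc => hab ℓ (hc.trans hsl.symm)
        · rw [hbSn ℓ hsl]
          exact hsl
      have hab' : ∀ ℓ, aS a b s ℓ ≠ bS a b s ℓ := by
        intro ℓ
        by_cases hsl : s ℓ
        · rw [haSp ℓ hsl, hbSp ℓ hsl]; exact (hab ℓ).symm
        · rw [haSn ℓ hsl, hbSn ℓ hsl]; exact hab ℓ
      have hA1' : ∀ ℓ, A (aS a b s ℓ) ℓ = 1 ∨ A (aS a b s ℓ) ℓ = -1 := by
        intro ℓ
        by_cases hsl : s ℓ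
        · rw [haSp ℓ hsl]; exact hA2 ℓ
        · rw [haSn ℓ hsl]; exact hA1 ℓ
      have hA2' : ∀ ℓ, A (bS a b s ℓ) ℓ = 1 ∨ A (bS a b s ℓ) ℓ = -1 := by
        intro ℓ
        by_cases hsl : s ℓ
        · rw [hbSp ℓ hsl]; exact hA1 ℓ
        · rw [hbSn ℓ hsl]; exact hA2 ℓ
      have hA0' : ∀ ℓ x, x ≠ aS a b s ℓ → x ≠ bS a b s ℓ → A x ℓ = 0 := by
        intro ℓ x h1 h2
        by_cases hsl : s ℓ
        · rw [haSp ℓ hsl] at h1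
          rw [hbSp ℓ hsl] at h2
          exact hA0 ℓ x h2 h1
        · rw [haSn ℓ hsl] at h1
          rw [hbSn ℓ hsl] at h2
          exact hA0 ℓ x h1 h2
      have hneg' : ∀ x, ∃ L, IsWalk (aS a b s) (bS a b s) x x L ∧
          esgn (aS a b s) (bS a b s) A L = -1 := by
        intro x
        obtain ⟨L, hL, hs'⟩ := hneg x
        exact ⟨L, isWalk_swap a b s hL, by rw [esgn_swap]; exact hs'⟩
      have hdeg' : ∀ z, (degF (aS a b s) (bS a b s) z).card = 2 := by
        intro z
        rw [degF_swap]
        exact hdeg2 z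
      obtain ⟨ℓ₁, ℓ₂, h12, hℓ₁₂⟩ := Finset.card_eq_two.mp (hdeg' v)
      have hvu : ∀ ℓ, aS a b s ℓ = v ∨ bS a b s ℓ = v → ℓ = ℓ₁ ∨ ℓ = ℓ₂ := by
        intro ℓ h
        have : ℓ ∈ degF (aS a b s) (bS a b s) v :=
          Finset.mem_filter.mpr ⟨Finset.mem_univ _, h⟩
        rw [hℓ₁₂] at this
        simpa using this
      have hmem1 : ℓ₁ ∈ degF (aS a b s) (bS a b s) v := by rw [hℓ₁₂]; simp
      have hmem2 : ℓ₂ ∈ degF (aS a b s) (bS a b s) v := by rw [hℓ₁₂]; simp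
      have ha1 : aS a b s ℓ₁ = v :=
        ((Finset.mem_filter.mp hmem1).2).resolve_right (hbv ℓ₁)
      have ha2 : aS a b s ℓ₂ = v :=
        ((Finset.mem_filter.mp hmem2).2).resolve_right (hbv ℓ₂)
      have hqc : Nat.card (Quot (Rel a b))
          = Nat.card (Quot (Rel (aS a b s) (bS a b s))) :=
        Nat.card_congr (Quot.congrRight (fun x y =>
          ⟨fun h => h.elim fun L hL => ⟨L, isWalk_swap a b s hL⟩,
           fun h => h.elim fun L hL => ⟨L, isWalk_swap_rev a b s hL⟩⟩))
      rw [hqc]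
      exact case_deg2 hk hab' hA1' hA2' hA0' hneg' h12 hvu ha1 ha2 hbv hdeg' IH f

end TUP

theorem TU_subgraph_incidence_det {n M : ℕ} (S : SignedIncidence n M)
    (hconn : S.G.Connected) (hunb : ¬ S.Balanced)
    (N : Matrix (Fin n) (Fin M) ℝ) (hN : S.IsIncidence N)
    (em : Fin n → Fin M) (hem : Function.Injective em)
    (HG : SimpleGraph (Fin n))
    (hHG : HG = SimpleGraph.fromEdgeSet (Set.range fun ℓ => S.edge (em ℓ)))
    (hcomp : ∀ v : Fin n, ∃ (u : Fin n) (w : HG.Walk u u),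
      HG.Reachable v u ∧ S.walkSign w = -1) :
    (N.submatrix id em).det = 2 ^ (Nat.card HG.ConnectedComponent) ∨
      (N.submatrix id em).det = -(2 ^ (Nat.card HG.ConnectedComponent)) := by
  classical
  set a : Fin n → Fin n := fun ℓ => (S.ends (em ℓ)).1 with hadef
  set b : Fin n → Fin n := fun ℓ => (S.ends (em ℓ)).2 with hbdef
  set A : Matrix (Fin n) (Fin n) ℝ := N.submatrix id em with hAdef
  have hab : ∀ ℓ, a ℓ ≠ b ℓ := fun ℓ => (S.ends_adj (em ℓ)).ne
  have hA1 : ∀ ℓ, A (a ℓ) ℓ = 1 ∨ A (a ℓ) ℓ = -1 := fun ℓ => (hN (em ℓ)).2.1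
  have hA2 : ∀ ℓ, A (b ℓ) ℓ = 1 ∨ A (b ℓ) ℓ = -1 := fun ℓ => (hN (em ℓ)).2.2.1
  have hA0 : ∀ ℓ x, x ≠ a ℓ → x ≠ b ℓ → A x ℓ = 0 := fun ℓ x h1 h2 =>
    (hN (em ℓ)).2.2.2 x h1 h2
  have hA1p : ∀ ℓ, TUP.pm1 (A (a ℓ) ℓ) := hA1
  have hA2p : ∀ ℓ, TUP.pm1 (A (b ℓ) ℓ) := hA2
  have hfac : ∀ ℓ, -(A (a ℓ) ℓ * A (b ℓ) ℓ) = ((S.sigma (a ℓ) (b ℓ) : ℤ) : ℝ) := by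
    intro ℓ
    have h := (hN (em ℓ)).1
    have : A (a ℓ) ℓ * A (b ℓ) ℓ = -((S.sigma (a ℓ) (b ℓ) : ℤ) : ℝ) := h
    rw [this]
    ring
  -- converting HG-walks to edge-list walks with matching sign
  have hconv : ∀ (p q : Fin n) (wpq : HG.Walk p q), ∃ L, TUP.IsWalk a b p q L ∧
      TUP.esgn a b A L = ((S.walkSign wpq : ℤ) : ℝ) := by
    intro p q wpq
    induction wpq with
    | nil =>
      refine ⟨[], TUP.IsWalk.nil _, ?_⟩
      rw [TUP.esgn_nil]
      simp [SignedIncidence.walkSign]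
    | @cons x y z hadj rest ih =>
      obtain ⟨L, hL, hs⟩ := ih
      have hadj' := hadj
      rw [hHG, SimpleGraph.fromEdgeSet_adj] at hadj'
      obtain ⟨⟨ℓ, hℓ⟩, hne⟩ := hadj'
      have hℓ' : s(a ℓ, b ℓ) = s(x, y) := hℓ
      have hws : S.walkSign (SimpleGraph.Walk.cons hadj rest)
          = S.sigma x y * S.walkSign rest := by
        simp [SignedIncidence.walkSign]
      rw [Sym2.eq_iff] at hℓ'
      rcases hℓ' with ⟨hax, hby⟩ | ⟨hay, hbx⟩
      · refine ⟨ℓ :: L, ?_, ?_⟩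
        · have hL' : TUP.IsWalk a b (b ℓ) z L := by rw [hby]; exact hL
          have := TUP.IsWalk.consA ℓ hL'
          rwa [hax] at this
        · rw [TUP.esgn_cons, hs, hfac ℓ, hws, hax, hby]
          push_cast
          ring
      · refine ⟨ℓ :: L, ?_, ?_⟩
        · have hL' : TUP.IsWalk a b (a ℓ) z L := by rw [hay]; exact hL
          have := TUP.IsWalk.consB ℓ hL'
          rwa [hbx] at this
        · rw [TUP.esgn_cons, hs, hfac ℓ, hws, S.sigma_symm, hay, hbx]
          push_cast
          ring
  have hneg : ∀ x, ∃ L, TUP.IsWalk a b x x L ∧ TUP.esgn a b A L = -1 := by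
    intro x
    obtain ⟨u, w, hreach, hsign⟩ := hcomp x
    obtain ⟨p⟩ := hreach
    obtain ⟨L₀, hL₀, _⟩ := hconv x u p
    obtain ⟨Lw, hLw, hsw⟩ := hconv u u w
    refine ⟨L₀ ++ Lw ++ L₀.reverse, ?_, ?_⟩
    · exact (hL₀.append hLw).append hL₀.reverse
    · rw [TUP.esgn_append, TUP.esgn_append, TUP.esgn_reverse, hsw, hsign]
      have hp := TUP.esgn_pm1 hA1p hA2p L₀
      push_cast
      rcases hp with h | h <;> rw [h] <;> ring
  -- the reachability relations agree
  have hiff : ∀ x y, TUP.Rel a b x y ↔ HG.Reachable x y := by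
    intro x y
    constructor
    · rintro ⟨L, hL⟩
      induction hL with
      | nil => exact SimpleGraph.Reachable.refl _
      | consA ℓ h ih =>
        refine SimpleGraph.Reachable.trans ?_ ih
        refine SimpleGraph.Adj.reachable ?_
        rw [hHG, SimpleGraph.fromEdgeSet_adj]
        exact ⟨⟨ℓ, rfl⟩, hab ℓ⟩
      | consB ℓ h ih =>
        refine SimpleGraph.Reachable.trans ?_ ih
        refine SimpleGraph.Adj.reachable ?_
        rw [hHG, SimpleGraph.fromEdgeSet_adj]
        refine ⟨⟨ℓ, ?_⟩, (hab ℓ).symm⟩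
        rw [Sym2.eq_swap]
        rfl
    · intro h
      obtain ⟨p⟩ := h
      obtain ⟨L, hL, _⟩ := hconv x y p
      exact ⟨L, hL⟩
  have hcard : Nat.card (Quot (TUP.Rel a b)) = Nat.card HG.ConnectedComponent :=
    Nat.card_congr (Quot.congrRight hiff)
  have hres := TUP.key n (Fin n) (Fin n) a b A (by simp) hab hA1 hA2 hA0 hneg (Equiv.refl _)
  rw [hcard] at hres
  have hAe : A.submatrix id ⇑(Equiv.refl (Fin n)) = N.submatrix id em := by
    rw [Equiv.coe_refl, Matrix.submatrix_id_id]
  rw [hAe] at hres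
  exact hres
end

section
/- Let Γ be an unbalanced connected signed graph on n ≥ 2 vertices with incidence matrix N. Then N N† = I_n, where N† is the Moore-Penrose inverse of N. -/
open Matrix BigOperators

/-- `X` is a Moore-Penrose inverse of `A`. -/
def IsMoorePenrose {p q : ℕ} (A : Matrix (Fin p) (Fin q) ℝ) (X : Matrix (Fin q) (Fin p) ℝ) : Prop :=
  A * X * A = A ∧ X * A * X = X ∧ (A * X)ᵀ = A * X ∧ (X * A)ᵀ = X * A

lemma aux_step {n m : ℕ} (S : SignedIncidence n m)
    (N : Matrix (Fin n) (Fin m) ℝ) (hN : S.IsIncidence N)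
    (x : Fin n → ℝ) (hx : ∀ ℓ, ∑ k, x k * N k ℓ = 0)
    {i j : Fin n} (hij : S.G.Adj i j) :
    x j = ((S.sigma i j : ℤ) : ℝ) * x i := by
  obtain ⟨ℓ, hℓ⟩ := S.ends_surj (Sym2.mk i j) (S.G.mem_edgeSet.mpr hij)
  set a := (S.ends ℓ).1 with ha
  set b := (S.ends ℓ).2 with hb
  obtain ⟨hprod, ha1, hb1, hz⟩ := hN ℓ
  have hab : a ≠ b := (S.ends_adj ℓ).ne
  have hsum : x a * N a ℓ + x b * N b ℓ = 0 := by
    have h0 : ∑ k, x k * N k ℓ = ∑ k ∈ ({a, b} : Finset (Fin n)), x k * N k ℓ := by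
      refine (Finset.sum_subset (Finset.subset_univ _) ?_).symm
      intro k _ hk
      simp only [Finset.mem_insert, Finset.mem_singleton, not_or] at hk
      rw [hz k hk.1 hk.2, mul_zero]
    have h1 := hx ℓ
    rw [h0, Finset.sum_pair hab] at h1
    exact h1
  have hxb : x b = ((S.sigma a b : ℤ) : ℝ) * x a := by
    have hb2 : N b ℓ * N b ℓ = 1 := by rcases hb1 with h | h <;> rw [h] <;> ring
    linear_combination (N b ℓ) * hsum - x a * hprod - x b * hb2
  have key : Sym2.mk a b = Sym2.mk i j := by
    exact hℓ
  rw [Sym2.eq_iff] at key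
  rcases key with ⟨h1, h2⟩ | ⟨h1, h2⟩
  · rw [← h1, ← h2]; exact hxb
  · -- a = j, b = i
    rw [h1, h2] at hxb
    have hs : S.sigma i j = S.sigma j i := S.sigma_symm i j
    have hsq : ((S.sigma i j : ℤ) : ℝ) * ((S.sigma i j : ℤ) : ℝ) = 1 := by
      rcases S.sigma_sign i j hij with h | h <;> rw [h] <;> norm_num
    rw [hs] at hsq ⊢
    linear_combination -((S.sigma j i : ℤ) : ℝ) * hxb - x j * hsq

lemma aux_walk {n m : ℕ} (S : SignedIncidence n m)
    (N : Matrix (Fin n) (Fin m) ℝ) (hN : S.IsIncidence N)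
    (x : Fin n → ℝ) (hx : ∀ ℓ, ∑ k, x k * N k ℓ = 0)
    {i j : Fin n} (w : S.G.Walk i j) :
    x j = ((S.walkSign w : ℤ) : ℝ) * x i := by
  induction w with
  | nil => simp [SignedIncidence.walkSign]
  | @cons u v j h p ih =>
    have hstep := aux_step S N hN x hx h
    have hsign : S.walkSign (SimpleGraph.Walk.cons h p) =
        S.sigma u v * S.walkSign p := by
      simp [SignedIncidence.walkSign, SimpleGraph.Walk.darts_cons]
    rw [hsign, ih]
    push_cast
    rw [hstep]
    ring

lemma aux_sign_pm {n m : ℕ} (S : SignedIncidence n m)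
    {i j : Fin n} (w : S.G.Walk i j) :
    S.walkSign w = 1 ∨ S.walkSign w = -1 := by
  induction w with
  | nil => left; simp [SignedIncidence.walkSign]
  | @cons u v j h p ih =>
    have hsign : S.walkSign (SimpleGraph.Walk.cons h p) =
        S.sigma u v * S.walkSign p := by
      simp [SignedIncidence.walkSign, SimpleGraph.Walk.darts_cons]
    rcases S.sigma_sign u v h with h1 | h1 <;> rcases ih with h2 | h2 <;>
      rw [hsign, h1, h2] <;> simp

lemma aux_kernel {n m : ℕ} (S : SignedIncidence n m)
    (hconn : S.G.Connected) (hunb : ¬ S.Balanced)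
    (N : Matrix (Fin n) (Fin m) ℝ) (hN : S.IsIncidence N)
    (x : Fin n → ℝ) (hx : ∀ ℓ, ∑ k, x k * N k ℓ = 0) :
    x = 0 := by
  simp only [SignedIncidence.Balanced, not_forall] at hunb
  obtain ⟨i, w, hw⟩ := hunb
  have hsign : S.walkSign w = -1 := (aux_sign_pm S w).resolve_left hw
  have hxi : x i = 0 := by
    have := aux_walk S N hN x hx w
    rw [hsign] at this
    push_cast at this
    linarith
  funext j
  obtain ⟨w'⟩ := hconn.preconnected i j
  have := aux_walk S N hN x hx w'
  rw [hxi, mul_zero] at this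
  simpa using this

theorem unbalanced_NNdagger {n m : ℕ} (hn : 2 ≤ n) (S : SignedIncidence n m)
    (hconn : S.G.Connected) (hunb : ¬ S.Balanced)
    (N : Matrix (Fin n) (Fin m) ℝ) (hN : S.IsIncidence N)
    (X : Matrix (Fin m) (Fin n) ℝ) (hX : IsMoorePenrose N X) :
    N * X = 1 := by
  have hM : (N * X - 1) * N = 0 := by
    rw [Matrix.sub_mul, Matrix.one_mul, hX.1, sub_self]
  have hrow : ∀ r : Fin n, ((N * X - 1 : Matrix (Fin n) (Fin n) ℝ) r) = 0 := by
    intro r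
    apply aux_kernel S hconn hunb N hN
    intro ℓ
    have := congrFun (congrFun hM r) ℓ
    rw [Matrix.mul_apply] at this
    simpa using this
  have : N * X - 1 = 0 := by
    ext r c
    have := congrFun (hrow r) c
    simpa using this
  exact sub_eq_zero.mp this
end

section
/- Let Γ be a balanced connected signed graph on n ≥ 2 vertices with incidence matrix N. Then N N† = I_n − (1/n) S, where S is the path sign matrix of Γ defined by s_{ii} = 1 and s_{ij} = sgn(P_{i−j}), the common sign of all paths from i to j. -/
open Matrix BigOperators

namespace SignedIncidence

lemma walkSign_append {n m : ℕ} (S : SignedIncidence n m) {G' : SimpleGraph (Fin n)}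
    {i j k : Fin n} (p : G'.Walk i j) (q : G'.Walk j k) :
    S.walkSign (p.append q) = S.walkSign p * S.walkSign q := by
  simp [walkSign, SimpleGraph.Walk.darts_append]

lemma walkSign_pm {n m : ℕ} (S : SignedIncidence n m) {i j : Fin n} (w : S.G.Walk i j) :
    S.walkSign w = 1 ∨ S.walkSign w = -1 := by
  induction w with
  | nil => left; rfl
  | cons h p ih =>
    have hs := S.sigma_sign _ _ h
    simp only [walkSign, SimpleGraph.Walk.darts_cons, List.map_cons, List.prod_cons] at *
    rcases hs with hs | hs <;> rcases ih with ih | ih <;> rw [hs, ih] <;> norm_num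

lemma walkSign_single {n m : ℕ} (S : SignedIncidence n m) {i j : Fin n} (h : S.G.Adj i j) :
    S.walkSign (SimpleGraph.Walk.cons h SimpleGraph.Walk.nil) = S.sigma i j := by
  simp [walkSign]

end SignedIncidence

lemma sum_two {α : Type*} [Fintype α] [DecidableEq α] {f : α → ℝ} {a b : α} (hab : a ≠ b)
    (h0 : ∀ k, k ≠ a → k ≠ b → f k = 0) : ∑ i, f i = f a + f b := by
  rw [← Finset.sum_subset (Finset.subset_univ ({a, b} : Finset α))]
  · rw [Finset.sum_pair hab]
  · intro x _ hx
    simp only [Finset.mem_insert, Finset.mem_singleton] at hx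
    push_neg at hx
    exact h0 x hx.1 hx.2

theorem balanced_NNdagger {n m : ℕ} (hn : 2 ≤ n) (S : SignedIncidence n m)
    (hconn : S.G.Connected) (hbal : S.Balanced)
    (N : Matrix (Fin n) (Fin m) ℝ) (hN : S.IsIncidence N)
    (X : Matrix (Fin m) (Fin n) ℝ) (hX : IsMoorePenrose N X)
    (Smat : Matrix (Fin n) (Fin n) ℝ)
    (hSdiag : ∀ i, Smat i i = 1)
    (hSpath : ∀ (i j : Fin n) (w : S.G.Walk i j), Smat i j = (S.walkSign w : ℝ)) :
    N * X = 1 - ((n : ℝ)⁻¹) • Smat := by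
  classical
  have hnpos : 0 < n := by omega
  have hn0 : (n : ℝ) ≠ 0 := Nat.cast_ne_zero.mpr (by omega)
  set i0 : Fin n := ⟨0, hnpos⟩ with hi0
  have hwalk : ∀ i j : Fin n, Nonempty (S.G.Walk i j) := fun i j => hconn.preconnected i j
  have hmul : ∀ i j k : Fin n, Smat i j * Smat j k = Smat i k := by
    intro i j k
    obtain ⟨p⟩ := hwalk i j
    obtain ⟨q⟩ := hwalk j k
    rw [hSpath i j p, hSpath j k q, hSpath i k (p.append q), S.walkSign_append p q]
    push_cast
    ring
  have hpm : ∀ i j : Fin n, Smat i j = 1 ∨ Smat i j = -1 := by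
    intro i j
    obtain ⟨p⟩ := hwalk i j
    rw [hSpath i j p]
    rcases S.walkSign_pm p with h | h <;> rw [h] <;> norm_num
  have hsq : ∀ i j : Fin n, Smat i j * Smat i j = 1 := by
    intro i j
    rcases hpm i j with h | h <;> rw [h] <;> norm_num
  have hsymm : ∀ i j : Fin n, Smat i j = Smat j i := by
    intro i j
    have h := hmul i j i
    rw [hSdiag i] at h
    rcases hpm i j with h1 | h1 <;> rcases hpm j i with h2 | h2 <;>
      rw [h1, h2] at h ⊢ <;> linarith
  have houter : ∀ i j : Fin n, Smat i j = Smat i0 i * Smat i0 j := by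
    intro i j
    rw [hsymm i0 i, hmul i i0 j]
  have hadjS : ∀ i j : Fin n, S.G.Adj i j → ((S.sigma i j : ℤ) : ℝ) = Smat i j := by
    intro i j h
    rw [hSpath i j (SimpleGraph.Walk.cons h SimpleGraph.Walk.nil), S.walkSign_single h]
  have hortho : ∀ ℓ : Fin m, ∑ i, Smat i0 i * N i ℓ = 0 := by
    intro ℓ
    obtain ⟨hprod, hA, hB, hzero⟩ := hN ℓ
    have hab : (S.ends ℓ).1 ≠ (S.ends ℓ).2 := (S.ends_adj ℓ).ne
    rw [sum_two hab (fun k hk1 hk2 => by rw [hzero k hk1 hk2, mul_zero])]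
    rw [hadjS _ _ (S.ends_adj ℓ), houter] at hprod
    rcases hA with h1 | h1 <;> rcases hB with h2 | h2 <;>
      rcases hpm i0 (S.ends ℓ).1 with h3 | h3 <;> rcases hpm i0 (S.ends ℓ).2 with h4 | h4 <;>
      rw [h1, h2, h3, h4] at hprod ⊢ <;> linarith
  have hker : ∀ x : Fin n → ℝ, (∀ ℓ, ∑ i, x i * N i ℓ = 0) → ∀ i, x i = Smat i0 i * x i0 := by
    intro x hx
    have key : ∀ (ℓ : Fin m) (a b : Fin n), (S.ends ℓ).1 = a → (S.ends ℓ).2 = b →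
        Smat i0 a * x a = Smat i0 b * x b := by
      intro ℓ a b hfst hsnd
      obtain ⟨hprod, hA, hB, hzero⟩ := hN ℓ
      rw [hfst] at hprod hA hzero
      rw [hsnd] at hprod hB hzero
      have hadj : S.G.Adj a b := by have := S.ends_adj ℓ; rwa [hfst, hsnd] at this
      have hab : a ≠ b := hadj.ne
      have hsum := hx ℓ
      rw [sum_two hab (fun k hk1 hk2 => by rw [hzero k hk1 hk2, mul_zero])] at hsum
      rw [hadjS _ _ hadj, houter] at hprod
      rcases hA with h1 | h1 <;> rcases hB with h2 | h2 <;>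
        rcases hpm i0 a with h3 | h3 <;> rcases hpm i0 b with h4 | h4 <;>
        rw [h1, h2] at hprod hsum <;> rw [h3, h4] at hprod ⊢ <;> linarith
    have hstep : ∀ a b : Fin n, S.G.Adj a b → Smat i0 a * x a = Smat i0 b * x b := by
      intro a b hadj
      obtain ⟨ℓ, hℓ⟩ := S.ends_surj (Sym2.mk a b) (S.G.mem_edgeSet.mpr hadj)
      have h2 : Sym2.mk (S.ends ℓ).1 (S.ends ℓ).2 = Sym2.mk a b := by
        exact hℓ
      rw [Sym2.eq_iff] at h2
      rcases h2 with ⟨hfst, hsnd⟩ | ⟨hfst, hsnd⟩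
      · exact key ℓ a b hfst hsnd
      · exact (key ℓ b a hfst hsnd).symm
    have hchain : ∀ (a b : Fin n) (w : S.G.Walk a b), Smat i0 a * x a = Smat i0 b * x b := by
      intro a b w
      induction w with
      | nil => rfl
      | cons h p ih => exact (hstep _ _ h).trans ih
    intro i
    obtain ⟨w⟩ := hwalk i0 i
    have h1 := hchain i0 i w
    rw [hSdiag i0, one_mul] at h1
    have h2 := hsq i0 i
    linear_combination (-(Smat i0 i)) * h1 + (-(x i)) * h2
  have hPsymm : ∀ a b : Fin n, (N * X) a b = (N * X) b a := by
    intro a b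
    nth_rewrite 1 [← hX.2.2.1]
    rw [Matrix.transpose_apply]
  have hPN : ∀ (j : Fin n) (ℓ : Fin m), ∑ i, (N * X) i j * N i ℓ = N j ℓ := by
    intro j ℓ
    have h1 : (N * X * N) j ℓ = N j ℓ := by rw [hX.1]
    rw [Matrix.mul_apply] at h1
    rw [← h1]
    exact Finset.sum_congr rfl fun i _ => by rw [hPsymm i j]
  have hsP : ∀ j : Fin n, ∑ i, Smat i0 i * (N * X) i j = 0 := by
    intro j
    have h1 : ∑ i, Smat i0 i * (N * X) i j = ∑ ℓ, (∑ i, Smat i0 i * N i ℓ) * X ℓ j := by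
      simp only [Matrix.mul_apply, Finset.mul_sum, Finset.sum_mul]
      rw [Finset.sum_comm]
      exact Finset.sum_congr rfl fun ℓ _ => Finset.sum_congr rfl fun i _ => by ring
    rw [h1]
    simp [hortho]
  ext i j
  set x : Fin n → ℝ :=
    fun k => (if k = j then (1 : ℝ) else 0) - (n : ℝ)⁻¹ * Smat k j - (N * X) k j with hxdef
  have hx : ∀ ℓ, ∑ k, x k * N k ℓ = 0 := by
    intro ℓ
    have e1 : ∑ k, x k * N k ℓ =
        (∑ k, (if k = j then (1 : ℝ) else 0) * N k ℓ)
        - (n : ℝ)⁻¹ * Smat i0 j * (∑ k, Smat i0 k * N k ℓ)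
        - ∑ k, (N * X) k j * N k ℓ := by
      rw [Finset.mul_sum, ← Finset.sum_sub_distrib, ← Finset.sum_sub_distrib]
      refine Finset.sum_congr rfl fun k _ => ?_
      simp only [hxdef]
      rw [houter k j]
      ring
    rw [e1, hortho, hPN]
    simp
  have hx0 := hker x hx
  have hsx : ∑ k, Smat i0 k * x k = 0 := by
    have e1 : ∑ k, Smat i0 k * x k =
        (∑ k, Smat i0 k * (if k = j then (1 : ℝ) else 0))
        - (n : ℝ)⁻¹ * (∑ k, Smat i0 k * Smat k j)
        - ∑ k, Smat i0 k * (N * X) k j := by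
      rw [Finset.mul_sum, ← Finset.sum_sub_distrib, ← Finset.sum_sub_distrib]
      refine Finset.sum_congr rfl fun k _ => ?_
      simp only [hxdef]
      ring
    have e2 : ∑ k, Smat i0 k * Smat k j = (n : ℝ) * Smat i0 j := by
      rw [Finset.sum_congr rfl fun k _ => hmul i0 k j]
      simp [Finset.sum_const, Finset.card_univ, mul_comm]
    have e3 : ∑ k, Smat i0 k * (if k = j then (1 : ℝ) else 0) = Smat i0 j := by
      simp
    rw [e1, e2, e3, hsP]
    rw [← mul_assoc, inv_mul_cancel₀ hn0]
    ring
  have hsx2 : ∑ k, Smat i0 k * x k = (n : ℝ) * x i0 := by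
    calc ∑ k, Smat i0 k * x k = ∑ k, Smat i0 k * (Smat i0 k * x i0) :=
          Finset.sum_congr rfl fun k _ => by rw [← hx0 k]
      _ = ∑ k, (1 : ℝ) * x i0 :=
          Finset.sum_congr rfl fun k _ => by rw [← mul_assoc, hsq i0 k]
      _ = (n : ℝ) * x i0 := by
          simp [Finset.sum_const, Finset.card_univ]
  have hxi0 : x i0 = 0 := by
    have h := hsx2.symm.trans hsx
    exact (mul_eq_zero.mp h).resolve_left hn0
  have hxi : x i = 0 := by rw [hx0 i, hxi0, mul_zero]
  have hfin : (if i = j then (1 : ℝ) else 0) - (n : ℝ)⁻¹ * Smat i j - (N * X) i j = 0 := hxi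
  simp only [Matrix.sub_apply, Matrix.smul_apply, Matrix.one_apply, smul_eq_mul]
  linarith [hfin]
end

section
/- Let Γ be a signed tree on n ≥ 2 vertices with incidence matrix N in which every negative edge has both incidences equal to +1 and every positive edge e = (l,m) has n_{le} = 1, n_{me} = −1. Define H = [h_{ij}] by h_{ij} = (sgn(P_{e_i−j})/n)·|T_h(e_i)| if j ∈ T_t(e_i), h_{ij} = (sgn(P_{e_i−j})/n)·|T_t(e_i)| if j ∈ T_h(e_i) and e_i is negative, and h_{ij} = −(sgn(P_{e_i−j})/n)·|T_t(e_i)| if j ∈ T_h(e_i) and e_i is positive. Then H N = I_{n−1}. -/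
open Matrix BigOperators

namespace SignedIncidence

variable {n m : ℕ}

/-- The graph with the edge `ℓ` deleted. -/
def delG (S : SignedIncidence n m) (ℓ : Fin m) : SimpleGraph (Fin n) :=
  S.G.deleteEdges {S.edge ℓ}

/-- The number of vertices of the head component of `Γ \ eℓ`
(the component containing the second end of `eℓ`). -/
noncomputable def headCard (S : SignedIncidence n m) (ℓ : Fin m) : ℕ :=
  {j : Fin n | (S.delG ℓ).Reachable (S.ends ℓ).2 j}.ncard

/-- The number of vertices of the tail component of `Γ \ eℓ`. -/
noncomputable def tailCard (S : SignedIncidence n m) (ℓ : Fin m) : ℕ :=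
  {j : Fin n | (S.delG ℓ).Reachable (S.ends ℓ).1 j}.ncard

namespace Aux

lemma walkSign_nil (S : SignedIncidence n m) {G' : SimpleGraph (Fin n)} (i : Fin n) :
    S.walkSign (SimpleGraph.Walk.nil : G'.Walk i i) = 1 := rfl

lemma walkSign_concat (S : SignedIncidence n m) {G' : SimpleGraph (Fin n)} {i j k : Fin n}
    (w : G'.Walk i j) (h : G'.Adj j k) :
    S.walkSign (w.concat h) = S.walkSign w * S.sigma j k := by
  unfold walkSign
  rw [SimpleGraph.Walk.darts_concat, List.map_concat, List.prod_concat]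

lemma edge_eq (S : SignedIncidence n m) (ℓ : Fin m) :
    S.edge ℓ = s((S.ends ℓ).1, (S.ends ℓ).2) := rfl

lemma not_reach (S : SignedIncidence n m) (htree : S.G.IsTree) (ℓ : Fin m) :
    ¬ (S.delG ℓ).Reachable (S.ends ℓ).1 (S.ends ℓ).2 := by
  have hb := (SimpleGraph.isAcyclic_iff_forall_adj_isBridge.mp htree.IsAcyclic) (S.ends_adj ℓ)
  rw [SimpleGraph.isBridge_iff] at hb
  exact hb

lemma reach_step (S : SignedIncidence n m) (ℓ : Fin m) :
    ∀ {u v : Fin n} (_ : S.G.Walk u v),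
      ((S.delG ℓ).Reachable (S.ends ℓ).1 v ∨ (S.delG ℓ).Reachable (S.ends ℓ).2 v) →
      ((S.delG ℓ).Reachable (S.ends ℓ).1 u ∨ (S.delG ℓ).Reachable (S.ends ℓ).2 u) := by
  intro u v w
  induction w with
  | nil => exact id
  | @cons u c _ h p ih =>
    intro hv
    rcases ih hv with hr | hr
    · by_cases he : s(u, c) = S.edge ℓ
      · rw [edge_eq, Sym2.eq_iff] at he
        rcases he with ⟨h1, _⟩ | ⟨h1, _⟩
        · exact Or.inl (h1 ▸ SimpleGraph.Reachable.refl _)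
        · exact Or.inr (h1 ▸ SimpleGraph.Reachable.refl _)
      · have hadj : (S.delG ℓ).Adj u c := by
          rw [delG, SimpleGraph.deleteEdges_adj]
          exact ⟨h, by simpa using he⟩
        exact Or.inl (hr.trans hadj.reachable.symm)
    · by_cases he : s(u, c) = S.edge ℓ
      · rw [edge_eq, Sym2.eq_iff] at he
        rcases he with ⟨h1, _⟩ | ⟨h1, _⟩
        · exact Or.inl (h1 ▸ SimpleGraph.Reachable.refl _)
        · exact Or.inr (h1 ▸ SimpleGraph.Reachable.refl _)
      · have hadj : (S.delG ℓ).Adj u c := by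
          rw [delG, SimpleGraph.deleteEdges_adj]
          exact ⟨h, by simpa using he⟩
        exact Or.inr (hr.trans hadj.reachable.symm)

lemma reach_cover (S : SignedIncidence n m) (htree : S.G.IsTree) (ℓ : Fin m) (j : Fin n) :
    (S.delG ℓ).Reachable (S.ends ℓ).1 j ∨ (S.delG ℓ).Reachable (S.ends ℓ).2 j := by
  obtain ⟨w⟩ := htree.isConnected j (S.ends ℓ).1
  exact reach_step S ℓ w (Or.inl (SimpleGraph.Reachable.refl _))

lemma card_sum (S : SignedIncidence n m) (htree : S.G.IsTree) (ℓ : Fin m) (hn : 0 < n) :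
    S.headCard ℓ + S.tailCard ℓ = n := by
  have hdisj : Disjoint {j : Fin n | (S.delG ℓ).Reachable (S.ends ℓ).2 j}
      {j : Fin n | (S.delG ℓ).Reachable (S.ends ℓ).1 j} := by
    rw [Set.disjoint_left]
    intro j hj2 hj1
    exact not_reach S htree ℓ (hj1.trans hj2.symm)
  have hcover : {j : Fin n | (S.delG ℓ).Reachable (S.ends ℓ).2 j} ∪
      {j : Fin n | (S.delG ℓ).Reachable (S.ends ℓ).1 j} = Set.univ := by
    ext j
    simp only [Set.mem_union, Set.mem_setOf_eq, Set.mem_univ, iff_true]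
    exact (reach_cover S htree ℓ j).symm
  have := Set.ncard_union_eq hdisj (Set.toFinite _) (Set.toFinite _)
  rw [hcover, Set.ncard_univ, Nat.card_eq_fintype_card, Fintype.card_fin] at this
  rw [headCard, tailCard]
  omega

end Aux

end SignedIncidence

open SignedIncidence.Aux in
set_option maxHeartbeats 1000000 in
theorem tree_HN_eq_id {m : ℕ} (hm : 1 ≤ m) (S : SignedIncidence (m + 1) m)
    (htree : S.G.IsTree)
    (N : Matrix (Fin (m + 1)) (Fin m) ℝ) (hN : S.IsIncidence N)
    (hnorm : ∀ ℓ : Fin m,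
      (S.sigma (S.ends ℓ).1 (S.ends ℓ).2 = -1 →
        N (S.ends ℓ).1 ℓ = 1 ∧ N (S.ends ℓ).2 ℓ = 1) ∧
      (S.sigma (S.ends ℓ).1 (S.ends ℓ).2 = 1 →
        N (S.ends ℓ).1 ℓ = 1 ∧ N (S.ends ℓ).2 ℓ = -1))
    (Hm : Matrix (Fin m) (Fin (m + 1)) ℝ)
    (hH : ∀ (ℓ : Fin m) (j : Fin (m + 1)),
      (∀ w : (S.delG ℓ).Walk (S.ends ℓ).1 j,
        Hm ℓ j = (S.walkSign w : ℝ) / (m + 1) * (S.headCard ℓ : ℝ)) ∧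
      (∀ w : (S.delG ℓ).Walk (S.ends ℓ).2 j,
        Hm ℓ j = (S.walkSign w : ℝ) / (m + 1) *
          (if S.sigma (S.ends ℓ).1 (S.ends ℓ).2 = -1
            then (S.tailCard ℓ : ℝ) else -(S.tailCard ℓ : ℝ)))) :
    Hm * N = 1 := by
  ext ℓ k
  rw [Matrix.mul_apply]
  have hab : (S.ends k).1 ≠ (S.ends k).2 := (S.ends_adj k).ne
  have hNk := hN k
  rw [Finset.sum_eq_add_of_mem (S.ends k).1 (S.ends k).2 (Finset.mem_univ _) (Finset.mem_univ _)
    hab (fun c _ hc => by rw [hNk.2.2.2 c hc.1 hc.2, mul_zero])]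
  have hm1 : ((m : ℝ) + 1) ≠ 0 := by positivity
  by_cases hlk : ℓ = k
  · subst hlk
    have ha : Hm ℓ (S.ends ℓ).1 = 1 / (m + 1) * (S.headCard ℓ : ℝ) := by
      have := (hH ℓ (S.ends ℓ).1).1 SimpleGraph.Walk.nil
      rwa [walkSign_nil, Int.cast_one] at this
    have hb : Hm ℓ (S.ends ℓ).2 = 1 / (m + 1) *
        (if S.sigma (S.ends ℓ).1 (S.ends ℓ).2 = -1
          then (S.tailCard ℓ : ℝ) else -(S.tailCard ℓ : ℝ)) := by
      have := (hH ℓ (S.ends ℓ).2).2 SimpleGraph.Walk.nil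
      rwa [walkSign_nil, Int.cast_one] at this
    have hcard : (S.headCard ℓ : ℝ) + (S.tailCard ℓ : ℝ) = (m : ℝ) + 1 := by
      have h := card_sum S htree ℓ (Nat.succ_pos m)
      exact_mod_cast h
    rw [Matrix.one_apply_eq]
    rcases S.sigma_sign _ _ (S.ends_adj ℓ) with hσ | hσ
    · have hNv := (hnorm ℓ).2 hσ
      rw [ha, hb, hNv.1, hNv.2, if_neg (by rw [hσ]; norm_num)]
      field_simp
      linarith
    · have hNv := (hnorm ℓ).1 hσ
      rw [ha, hb, hNv.1, hNv.2, if_pos hσ]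
      field_simp
      linarith
  · rw [Matrix.one_apply_ne hlk]
    have hedge : s((S.ends k).1, (S.ends k).2) ≠ S.edge ℓ := fun h => hlk (S.ends_inj h.symm)
    have hadj : (S.delG ℓ).Adj (S.ends k).1 (S.ends k).2 := by
      rw [SignedIncidence.delG, SimpleGraph.deleteEdges_adj]
      exact ⟨S.ends_adj k, by simpa using hedge⟩
    have key : ∃ s C : ℝ, Hm ℓ (S.ends k).1 = s * C ∧
        Hm ℓ (S.ends k).2 = s * ((S.sigma (S.ends k).1 (S.ends k).2 : ℤ) : ℝ) * C := by
      rcases reach_cover S htree ℓ (S.ends k).1 with hr | hr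
      · obtain ⟨w⟩ := hr
        have h1' := (hH ℓ (S.ends k).1).1 w
        have h2' := (hH ℓ (S.ends k).2).1 (w.concat hadj)
        rw [walkSign_concat, Int.cast_mul] at h2'
        exact ⟨(S.walkSign w : ℝ) / (m + 1), (S.headCard ℓ : ℝ), h1', by rw [h2']; ring⟩
      · obtain ⟨w⟩ := hr
        have h1' := (hH ℓ (S.ends k).1).2 w
        have h2' := (hH ℓ (S.ends k).2).2 (w.concat hadj)
        rw [walkSign_concat, Int.cast_mul] at h2'
        exact ⟨(S.walkSign w : ℝ) / (m + 1),
          (if S.sigma (S.ends ℓ).1 (S.ends ℓ).2 = -1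
            then (S.tailCard ℓ : ℝ) else -(S.tailCard ℓ : ℝ)), h1', by rw [h2']; ring⟩
    obtain ⟨s, C, h1, h2⟩ := key
    rw [h1, h2]
    rcases S.sigma_sign _ _ (S.ends_adj k) with hσ | hσ
    · have hNv := (hnorm k).2 hσ
      rw [hσ, hNv.1, hNv.2]; push_cast; ring
    · have hNv := (hnorm k).1 hσ
      rw [hσ, hNv.1, hNv.2]; push_cast; ring
end

section
/- Let Γ be a balanced connected signed graph with Laplacian L = N Nᵀ. Then the Moore-Penrose inverse satisfies L† = (N†)ᵀ N†, and for all vertices i, j: ℓ†_{ii} + ℓ†_{jj} − 2·sgn(P_{i−j})·ℓ†_{ij} equals the effective-resistance-type quantity determined by N† (in particular L† L = L L† = I − (1/n)S, where S is the path sign matrix). -/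
open Matrix BigOperators

section Aux
variable {n m : ℕ} (S : SignedIncidence n m)

lemma walkSign_nil {G' : SimpleGraph (Fin n)} {a : Fin n} :
    S.walkSign (SimpleGraph.Walk.nil : G'.Walk a a) = 1 := by
  simp [SignedIncidence.walkSign]

lemma walkSign_cons {G' : SimpleGraph (Fin n)} {a b c : Fin n} (h : G'.Adj a b)
    (p : G'.Walk b c) :
    S.walkSign (SimpleGraph.Walk.cons h p) = S.sigma a b * S.walkSign p := by
  simp [SignedIncidence.walkSign, SimpleGraph.Walk.darts_cons]

lemma walkSign_append {G' : SimpleGraph (Fin n)} {a b c : Fin n} (p : G'.Walk a b)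
    (q : G'.Walk b c) :
    S.walkSign (p.append q) = S.walkSign p * S.walkSign q := by
  simp [SignedIncidence.walkSign, SimpleGraph.Walk.darts_append]

lemma walkSign_reverse {G' : SimpleGraph (Fin n)} {a b : Fin n} (p : G'.Walk a b) :
    S.walkSign p.reverse = S.walkSign p := by
  have hfun : (fun d : G'.Dart => S.sigma d.toProd.1 d.toProd.2) ∘ SimpleGraph.Dart.symm
      = fun d : G'.Dart => S.sigma d.toProd.1 d.toProd.2 := by
    funext d
    simp [SimpleGraph.Dart.symm, S.sigma_symm]
  simp [SignedIncidence.walkSign, SimpleGraph.Walk.darts_reverse, List.map_reverse,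
    List.map_map, hfun, List.prod_reverse]

lemma walkSign_sq {a b : Fin n} (p : S.G.Walk a b) :
    S.walkSign p * S.walkSign p = 1 := by
  induction p with
  | nil => simp [walkSign_nil]
  | cons h q ih =>
      rw [walkSign_cons]
      rcases S.sigma_sign _ _ h with hs | hs <;> rw [hs] <;> ring_nf <;>
        ring_nf at ih <;> simpa using ih

end Aux

lemma mp_unique {p q : ℕ} (A : Matrix (Fin p) (Fin q) ℝ)
    (X1 X2 : Matrix (Fin q) (Fin p) ℝ)
    (hx1 : IsMoorePenrose A X1) (hx2 : IsMoorePenrose A X2) : X1 = X2 := by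
  obtain ⟨a1, b1, c1, d1⟩ := hx1
  obtain ⟨a2, b2, c2, d2⟩ := hx2
  have hAX : A * X1 = A * X2 := by
    calc A * X1 = (A * X2 * A) * X1 := by rw [a2]
    _ = (A * X2) * (A * X1) := by simp only [Matrix.mul_assoc]
    _ = (A * X2)ᵀ * (A * X1)ᵀ := by rw [c1, c2]
    _ = ((A * X1) * (A * X2))ᵀ := by rw [← Matrix.transpose_mul]
    _ = (A * X1 * A * X2)ᵀ := by simp only [Matrix.mul_assoc]
    _ = (A * X2)ᵀ := by rw [a1]
    _ = A * X2 := c2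
  have hXA : X1 * A = X2 * A := by
    calc X1 * A = X1 * (A * X2 * A) := by rw [a2]
    _ = (X1 * A) * (X2 * A) := by simp only [Matrix.mul_assoc]
    _ = (X1 * A)ᵀ * (X2 * A)ᵀ := by rw [d1, d2]
    _ = ((X2 * A) * (X1 * A))ᵀ := by rw [← Matrix.transpose_mul]
    _ = (X2 * (A * X1 * A))ᵀ := by simp only [Matrix.mul_assoc]
    _ = (X2 * A)ᵀ := by rw [a1]
    _ = X2 * A := d2
  calc X1 = X1 * A * X1 := b1.symm
  _ = X1 * (A * X2) := by rw [Matrix.mul_assoc, hAX]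
  _ = (X1 * A) * X2 := by rw [Matrix.mul_assoc]
  _ = (X2 * A) * X2 := by rw [hXA]
  _ = X2 := b2

lemma sum_two_s15 {n : ℕ} (f : Fin n → ℝ) (a b : Fin n) (hab : a ≠ b)
    (h : ∀ k, k ≠ a → k ≠ b → f k = 0) : ∑ k, f k = f a + f b := by
  rw [← Finset.sum_pair hab]
  refine (Finset.sum_subset (Finset.subset_univ _) fun x _ hx => ?_).symm
  simp only [Finset.mem_insert, Finset.mem_singleton, not_or] at hx
  exact h x hx.1 hx.2

theorem projection_main {n m : ℕ} (hn : 2 ≤ n) (S : SignedIncidence n m)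
    (hconn : S.G.Connected)
    (N : Matrix (Fin n) (Fin m) ℝ) (hN : S.IsIncidence N)
    (X : Matrix (Fin m) (Fin n) ℝ) (hX : IsMoorePenrose N X)
    (Smat : Matrix (Fin n) (Fin n) ℝ)
    (hSdiag : ∀ i, Smat i i = 1)
    (hSpath : ∀ (i j : Fin n) (w : S.G.Walk i j), Smat i j = (S.walkSign w : ℝ)) :
    N * X = 1 - ((n : ℝ)⁻¹) • Smat := by
  classical
  obtain ⟨h1, h2, h3, h4⟩ := hX
  have hn0 : (n : ℝ) ≠ 0 := by positivity
  set i0 : Fin n := ⟨0, by omega⟩ with hi0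
  have hwalk : ∀ i j : Fin n, S.G.Walk i j := fun i j => (hconn.preconnected i j).some
  set v : Fin n → ℝ := fun i => Smat i0 i with hv
  -- Smat i j = v i * v j
  have hmulS : ∀ i j, Smat i j = v i * v j := by
    intro i j
    have w1 := hwalk i0 i
    have w2 := hwalk i0 j
    have h := hSpath i j ((w1.reverse).append w2)
    rw [walkSign_append, walkSign_reverse] at h
    rw [h]
    simp only [hv]
    rw [hSpath i0 i w1, hSpath i0 j w2]
    push_cast
    ring
  have hS2 : ∀ i j, Smat i j * Smat i j = 1 := by
    intro i j
    rw [hSpath i j (hwalk i j)]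
    have := walkSign_sq S (hwalk i j)
    exact_mod_cast congrArg (fun z : ℤ => (z : ℝ)) this
  have hvsq : ∀ i, v i * v i = 1 := fun i => by
    have := hmulS i i; rw [hSdiag] at this; linarith [this]
  -- normalized edge incidence info
  have hedge : ∀ a b, S.G.Adj a b → ∃ ℓ : Fin m,
      N a ℓ * N b ℓ = -((S.sigma a b : ℤ) : ℝ) ∧ N a ℓ * N a ℓ = 1 ∧ N b ℓ * N b ℓ = 1 ∧
      ∀ k, k ≠ a → k ≠ b → N k ℓ = 0 := by
    intro a b hab
    obtain ⟨ℓ, hℓ⟩ := S.ends_surj s(a, b) (by rwa [SimpleGraph.mem_edgeSet])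
    obtain ⟨p1, p2, p3, p4⟩ := hN ℓ
    have sq : ∀ x : ℝ, x = 1 ∨ x = -1 → x * x = 1 := by rintro x (rfl | rfl) <;> norm_num
    have hℓ' : s((S.ends ℓ).1, (S.ends ℓ).2) = s(a, b) := hℓ
    rcases Sym2.eq_iff.mp hℓ' with ⟨ha, hb⟩ | ⟨ha, hb⟩
    · refine ⟨ℓ, ?_, ?_, ?_, ?_⟩
      · rw [← ha, ← hb]; exact p1
      · rw [← ha]; exact sq _ p2
      · rw [← hb]; exact sq _ p3
      · intro k hk1 hk2; exact p4 k (by rw [ha]; exact hk1) (by rw [hb]; exact hk2)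
    · refine ⟨ℓ, ?_, ?_, ?_, ?_⟩
      · rw [← hb, ← ha, S.sigma_symm, mul_comm]
        exact p1
      · rw [← hb]; exact sq _ p3
      · rw [← ha]; exact sq _ p2
      · intro k hk1 hk2; exact p4 k (by rw [ha]; exact hk2) (by rw [hb]; exact hk1)
  -- kernel step along an edge
  have hstep : ∀ a b, S.G.Adj a b → ∀ u : Fin n → ℝ, Nᵀ *ᵥ u = 0 →
      u b = ((S.sigma a b : ℤ) : ℝ) * u a := by
    intro a b hab u hu
    obtain ⟨ℓ, m1, m2, m3, m4⟩ := hedge a b hab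
    have e : ∑ k, N k ℓ * u k = 0 := by
      have := congrFun hu ℓ
      simpa [Matrix.mulVec, dotProduct, Matrix.transpose_apply] using this
    rw [sum_two_s15 (fun k => N k ℓ * u k) a b hab.ne
      (fun k hk1 hk2 => by show N k ℓ * u k = 0; rw [m4 k hk1 hk2, zero_mul])] at e
    linear_combination (N b ℓ) * e - (u a) * m1 - (u b) * m3
  -- kernel along a walk
  have hker : ∀ u : Fin n → ℝ, Nᵀ *ᵥ u = 0 → ∀ (a b : Fin n) (w : S.G.Walk a b),
      u b = ((S.walkSign w : ℤ) : ℝ) * u a := by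
    intro u hu a b w
    induction w with
    | nil => rw [walkSign_nil]; norm_num
    | cons h p ih =>
        rw [walkSign_cons]
        push_cast
        rw [ih, hstep _ _ h u hu]
        ring
  -- v is in the kernel
  have hvker : Nᵀ *ᵥ v = 0 := by
    funext ℓ
    set a := (S.ends ℓ).1 with ha
    set b := (S.ends ℓ).2 with hb
    have hab : S.G.Adj a b := S.ends_adj ℓ
    obtain ⟨p1, p2, p3, p4⟩ := hN ℓ
    have sq : ∀ x : ℝ, x = 1 ∨ x = -1 → x * x = 1 := by rintro x (rfl | rfl) <;> norm_num
    have F3 : N b ℓ * N b ℓ = 1 := sq _ p3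
    have F4 : v a * v a = 1 := hvsq a
    have F1 : v a * v b = ((S.sigma a b : ℤ) : ℝ) := by
      rw [← hmulS a b, hSpath a b (SimpleGraph.Walk.cons hab SimpleGraph.Walk.nil),
        walkSign_cons, walkSign_nil]
      push_cast
      ring
    have hvb : v b = ((S.sigma a b : ℤ) : ℝ) * v a := by
      linear_combination (v a) * F1 - (v b) * F4
    have hsum : (Nᵀ *ᵥ v) ℓ = ∑ k, N k ℓ * v k := by
      simp [Matrix.mulVec, dotProduct, Matrix.transpose_apply]
    show (Nᵀ *ᵥ v) ℓ = 0
    rw [hsum, sum_two_s15 (fun k => N k ℓ * v k) a b hab.ne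
      (fun k hk1 hk2 => by show N k ℓ * v k = 0; rw [p4 k hk1 hk2, zero_mul])]
    rw [hvb]
    linear_combination (N b ℓ * v a) * p1 - (N a ℓ * v a) * F3
  -- v dot v = n
  have hvv : v ⬝ᵥ v = (n : ℝ) := by
    simp only [dotProduct]
    rw [Finset.sum_congr rfl fun i _ => hvsq i]
    simp
  have hv0 : v ≠ 0 := by
    intro h0
    have : v i0 = 0 := by rw [h0]; rfl
    rw [hv] at this
    simp only [hSdiag i0] at this
    norm_num at this
  -- kernel of Nᵀ is the span of v
  have hkerNT : LinearMap.ker (Nᵀ.mulVecLin) = Submodule.span ℝ {v} := by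
    apply le_antisymm
    · intro u hu
      have hu' : Nᵀ *ᵥ u = 0 := hu
      have : u = u i0 • v := by
        funext i
        have := hker u hu' i0 i (hwalk i0 i)
        rw [← hSpath i0 i (hwalk i0 i)] at this
        simp only [Pi.smul_apply, smul_eq_mul, hv]
        rw [this]; ring
      rw [this]
      exact Submodule.smul_mem _ _ (Submodule.mem_span_singleton_self v)
    · rw [Submodule.span_le, Set.singleton_subset_iff]
      exact hvker
  have hrange : LinearMap.range (N.mulVecLin) ⊔ Submodule.span ℝ {v} = ⊤ := by
    have hVnotin : v ∉ LinearMap.range (N.mulVecLin) := by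
      rintro ⟨z, hz⟩
      have hz' : N *ᵥ z = v := hz
      have h0 : v ⬝ᵥ (N *ᵥ z) = 0 := by
        rw [Matrix.dotProduct_mulVec, ← Matrix.mulVec_transpose, hvker, zero_dotProduct]
      rw [hz', hvv] at h0
      exact hn0 h0
    have hinf : LinearMap.range (N.mulVecLin) ⊓ Submodule.span ℝ {v} = ⊥ := by
      rw [Submodule.eq_bot_iff]
      rintro x ⟨hx1, hx2⟩
      obtain ⟨c, rfl⟩ := Submodule.mem_span_singleton.mp hx2
      rcases eq_or_ne c 0 with rfl | hc
      · simp
      · exfalso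
        apply hVnotin
        have : c⁻¹ • (c • v) ∈ LinearMap.range (N.mulVecLin) :=
          Submodule.smul_mem _ _ hx1
        rwa [smul_smul, inv_mul_cancel₀ hc, one_smul] at this
    have hrk : Module.finrank ℝ (LinearMap.range (Nᵀ.mulVecLin)) + 1 = n := by
      have h := LinearMap.finrank_range_add_finrank_ker (Nᵀ.mulVecLin)
      rw [hkerNT, finrank_span_singleton hv0, Module.finrank_fintype_fun_eq_card,
        Fintype.card_fin] at h
      exact h
    have hrkN : Module.finrank ℝ (LinearMap.range (N.mulVecLin)) + 1 = n := by
      have : Nᵀ.rank = N.rank := Matrix.rank_transpose N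
      have e1 : N.rank = Module.finrank ℝ (LinearMap.range (N.mulVecLin)) := rfl
      have e2 : Nᵀ.rank = Module.finrank ℝ (LinearMap.range (Nᵀ.mulVecLin)) := rfl
      rw [e1, e2] at this
      rw [← this]
      exact hrk
    have hfr := Submodule.finrank_sup_add_finrank_inf_eq
      (LinearMap.range (N.mulVecLin)) (Submodule.span ℝ {v})
    rw [hinf, finrank_span_singleton hv0, finrank_bot, add_zero] at hfr
    apply Submodule.eq_top_of_finrank_eq
    rw [hfr, hrkN, Module.finrank_fintype_fun_eq_card, Fintype.card_fin]
  -- decomposition of arbitrary vectors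
  have hdecomp : ∀ w : Fin n → ℝ, ∃ (z : Fin m → ℝ) (c : ℝ), w = N *ᵥ z + c • v := by
    intro w
    have : w ∈ LinearMap.range (N.mulVecLin) ⊔ Submodule.span ℝ {v} := by
      rw [hrange]; trivial
    obtain ⟨y, hy, x, hx, hyx⟩ := Submodule.mem_sup.mp this
    obtain ⟨z, hz⟩ := hy
    obtain ⟨c, hc⟩ := Submodule.mem_span_singleton.mp hx
    exact ⟨z, c, by rw [← hyx, ← hz, ← hc, Matrix.mulVecLin_apply]⟩
  -- the projection identity on vectors
  have hproj : ∀ w : Fin n → ℝ, (N * X) *ᵥ w = w - ((n : ℝ)⁻¹ * (v ⬝ᵥ w)) • v := by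
    intro w
    obtain ⟨z, c, rfl⟩ := hdecomp w
    have hPv : (N * X) *ᵥ v = 0 := by
      rw [← h3, Matrix.transpose_mul, ← Matrix.mulVec_mulVec, hvker, Matrix.mulVec_zero]
    have hPN : (N * X) *ᵥ (N *ᵥ z) = N *ᵥ z := by
      rw [Matrix.mulVec_mulVec, h1]
    have hvdot : v ⬝ᵥ (N *ᵥ z + c • v) = c * (n : ℝ) := by
      rw [dotProduct_add, dotProduct_smul, hvv]
      have : v ⬝ᵥ (N *ᵥ z) = 0 := by
        rw [Matrix.dotProduct_mulVec, ← Matrix.mulVec_transpose, hvker, zero_dotProduct]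
      rw [this, zero_add, smul_eq_mul]
    rw [Matrix.mulVec_add, Matrix.mulVec_smul, hPv, hPN, hvdot, smul_zero, add_zero]
    have : (n : ℝ)⁻¹ * (c * n) = c := by field_simp
    rw [this]
    abel
  -- matrix identity
  ext i j
  have key := congrFun (hproj (Pi.single j 1)) i
  rw [Matrix.mulVec_single] at key
  simp only [MulOpposite.op_one, one_smul, Matrix.col_apply] at key
  rw [key]
  have hds : v ⬝ᵥ Pi.single j 1 = v j := by rw [dotProduct_single, mul_one]
  simp only [Pi.sub_apply, Pi.smul_apply, smul_eq_mul, hds]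
  rw [Matrix.sub_apply, Matrix.smul_apply, Matrix.one_apply, hmulS i j, smul_eq_mul]
  by_cases hij : i = j <;> simp [hij, Pi.single_apply] <;> ring

lemma Smat_sq {n m : ℕ} (S : SignedIncidence n m) (hconn : S.G.Connected)
    (Smat : Matrix (Fin n) (Fin n) ℝ)
    (hSpath : ∀ (i j : Fin n) (w : S.G.Walk i j), Smat i j = (S.walkSign w : ℝ))
    (i j : Fin n) : Smat i j * Smat i j = 1 := by
  classical
  have w := (hconn.preconnected i j).some
  rw [hSpath i j w]
  have h := walkSign_sq S w
  exact_mod_cast congrArg (fun z : ℤ => (z : ℝ)) h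

theorem balanced_laplacian_MP {n m : ℕ} (hn : 2 ≤ n) (S : SignedIncidence n m)
    (hconn : S.G.Connected) (hbal : S.Balanced)
    (N : Matrix (Fin n) (Fin m) ℝ) (hN : S.IsIncidence N)
    (L : Matrix (Fin n) (Fin n) ℝ) (hL : L = N * Nᵀ)
    (X : Matrix (Fin m) (Fin n) ℝ) (hX : IsMoorePenrose N X)
    (Y : Matrix (Fin n) (Fin n) ℝ) (hY : IsMoorePenrose L Y)
    (Smat : Matrix (Fin n) (Fin n) ℝ)
    (hSdiag : ∀ i, Smat i i = 1)
    (hSpath : ∀ (i j : Fin n) (w : S.G.Walk i j), Smat i j = (S.walkSign w : ℝ)) :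
    Y = Xᵀ * X ∧
    L * Y = 1 - ((n : ℝ)⁻¹) • Smat ∧
    Y * L = 1 - ((n : ℝ)⁻¹) • Smat ∧
    ∀ i j : Fin n,
      Y i i + Y j j - 2 * Smat i j * Y i j =
        ∑ k : Fin m, (X k i - Smat i j * X k j) ^ 2 := by
  obtain ⟨h1, h2, h3, h4⟩ := hX
  have hNX : Nᵀ * Xᵀ = X * N := by
    calc Nᵀ * Xᵀ = (X * N)ᵀ := (Matrix.transpose_mul X N).symm
    _ = X * N := h4
  have hXN' : Xᵀ * Nᵀ = N * X := by
    calc Xᵀ * Nᵀ = (N * X)ᵀ := (Matrix.transpose_mul N X).symm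
    _ = N * X := h3
  have hLXX : L * (Xᵀ * X) = N * X := by
    rw [hL]
    calc N * Nᵀ * (Xᵀ * X) = N * ((Nᵀ * Xᵀ) * X) := by simp only [Matrix.mul_assoc]
    _ = N * (X * N * X) := by rw [hNX]
    _ = N * X := by rw [h2]
  have hXXL : (Xᵀ * X) * L = N * X := by
    rw [hL]
    calc Xᵀ * X * (N * Nᵀ) = Xᵀ * ((X * N) * Nᵀ) := by simp only [Matrix.mul_assoc]
    _ = Xᵀ * ((Nᵀ * Xᵀ) * Nᵀ) := by rw [hNX]
    _ = (Xᵀ * Nᵀ) * (Xᵀ * Nᵀ) := by simp only [Matrix.mul_assoc]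
    _ = (N * X) * (N * X) := by rw [hXN']
    _ = N * (X * N * X) := by simp only [Matrix.mul_assoc]
    _ = N * X := by rw [h2]
  have hMPXX : IsMoorePenrose L (Xᵀ * X) := by
    refine ⟨?_, ?_, ?_, ?_⟩
    · rw [hLXX, hL]
      calc (N * X) * (N * Nᵀ) = ((N * X) * N) * Nᵀ := by simp only [Matrix.mul_assoc]
      _ = N * Nᵀ := by rw [h1]
    · rw [hXXL]
      calc (N * X) * (Xᵀ * X) = (Xᵀ * Nᵀ) * (Xᵀ * X) := by rw [hXN']
      _ = Xᵀ * ((Nᵀ * Xᵀ) * X) := by simp only [Matrix.mul_assoc]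
      _ = Xᵀ * (X * N * X) := by rw [hNX]
      _ = Xᵀ * X := by rw [h2]
    · rw [hLXX]; exact h3
    · rw [hXXL]; exact h3
  have hYeq : Y = Xᵀ * X := mp_unique L Y (Xᵀ * X) hY hMPXX
  have hP := projection_main hn S hconn N hN X ⟨h1, h2, h3, h4⟩ Smat hSdiag hSpath
  refine ⟨hYeq, ?_, ?_, ?_⟩
  · rw [hYeq, hLXX, hP]
  · rw [hYeq, hXXL, hP]
  · intro i j
    have hs : Smat i j * Smat i j = 1 := Smat_sq S hconn Smat hSpath i j
    rw [hYeq]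
    have hent : ∀ a b : Fin n, (Xᵀ * X) a b = ∑ k, X k a * X k b := fun a b => by
      simp [Matrix.mul_apply, Matrix.transpose_apply]
    rw [hent, hent, hent]
    have hterm : ∀ k : Fin m, (X k i - Smat i j * X k j) ^ 2
        = X k i * X k i + X k j * X k j - 2 * Smat i j * (X k i * X k j) :=
      fun k => by linear_combination (X k j * X k j) * hs
    rw [Finset.sum_congr rfl fun k _ => hterm k, Finset.sum_sub_distrib,
      Finset.sum_add_distrib, ← Finset.mul_sum]
end
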